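/- arXiv:1807.10217 — 4 statements merged into one kernel-verified Lean document; each statement's English description precedes it below -/
import Mathlib

section
/- If udim(Y) = w then udim(T(Y)) = w* and udim(T'(Y)) = w*, where w* is the reverse of w. In particular T and T' restrict to maps P(w) → P(w*). -/
open scoped BigOperators Classical

noncomputable section

/-- A triangular array of size `n`: entries `y i j` for `1 ≤ i ≤ n`, `1 ≤ j ≤ n - i + 1`
(zero outside this range), weakly decreasing along ladders: `y (i-1) (j+1) ≤ y i j`. -/
def IsTri (n : ℕ) (y : ℕ → ℕ → ℕ) : Prop :=
  (∀ i j, ¬(1 ≤ i ∧ i ≤ n ∧ 1 ≤ j ∧ j ≤ n - i + 1) → y i j = 0) ∧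
  (∀ i j, 2 ≤ i → i ≤ n → 1 ≤ j → j ≤ n - i + 1 → y (i - 1) (j + 1) ≤ y i j)

/-- The dimension vector of a triangular array: the `i`-th chute sum. -/
def udim (n : ℕ) (y : ℕ → ℕ → ℕ) (i : ℕ) : ℕ := ∑ j ∈ Finset.Icc 1 (n - i + 1), y i j

/-- The set `P(w)` of triangular arrays of size `n` with dimension vector `w`. -/
def InP (n : ℕ) (w : ℕ → ℕ) (y : ℕ → ℕ → ℕ) : Prop :=
  IsTri n y ∧ ∀ i, 1 ≤ i → i ≤ n → udim n y i = w i

/-- The set `B(w)`: families `(b i j)` for `1 ≤ i ≤ j ≤ n` (zero outside) with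
`∑ b i j • γ_{ij} = w`, i.e. for each `1 ≤ k ≤ n`, `∑_{i ≤ k ≤ j} b i j = w k`. -/
def InB (n : ℕ) (w : ℕ → ℕ) (b : ℕ → ℕ → ℕ) : Prop :=
  (∀ i j, ¬(1 ≤ i ∧ i ≤ j ∧ j ≤ n) → b i j = 0) ∧
  ∀ k, 1 ≤ k → k ≤ n → (∑ i ∈ Finset.Icc 1 k, ∑ j ∈ Finset.Icc k n, b i j) = w k

/-- The map `ν : P(w) → B(w)`. -/
def nuMap (n : ℕ) (y : ℕ → ℕ → ℕ) : ℕ → ℕ → ℕ := fun i j =>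
  if 1 ≤ i ∧ i ≤ j ∧ j ≤ n then y i (j - i + 1) - y (i - 1) (j - i + 2) else 0

/-- The map `ν̄ : B(w) → P(w)`. -/
def nubarMap (n : ℕ) (b : ℕ → ℕ → ℕ) : ℕ → ℕ → ℕ := fun i j =>
  if 1 ≤ i ∧ i ≤ n ∧ 1 ≤ j ∧ j ≤ n - i + 1 then ∑ h ∈ Finset.Icc 1 i, b h (i + j - 1) else 0

/-- `Raise Y i j` increments the entry in chute `i`, column `j`. -/
def Raise (y : ℕ → ℕ → ℕ) (i j : ℕ) : ℕ → ℕ → ℕ := fun p q =>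
  if p = i ∧ q = j then y p q + 1 else y p q

/-- `Lower Y i j` decrements the entry in chute `i`, column `j`. -/
def Lower (y : ℕ → ℕ → ℕ) (i j : ℕ) : ℕ → ℕ → ℕ := fun p q =>
  if p = i ∧ q = j then y p q - 1 else y p q

/-- `K_i(Y,k) = max({1} ∪ {j : 2 ≤ j ≤ k, y i j < y (i+1) (j-1)})`. -/
def Kval (y : ℕ → ℕ → ℕ) (i k : ℕ) : ℕ :=
  ((Finset.Icc 2 k).filter (fun j => y i j < y (i + 1) (j - 1))).sup id ⊔ 1

/-- Procedure `a`: `a(Y,i,k) = (Raise(Y,i,K_i(Y,k)), i-1, K_i(Y,k))`. -/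
def aStep (t : (ℕ → ℕ → ℕ) × ℕ × ℕ) : (ℕ → ℕ → ℕ) × ℕ × ℕ :=
  (Raise t.1 t.2.1 (Kval t.1 t.2.1 t.2.2), t.2.1 - 1, Kval t.1 t.2.1 t.2.2)

/-- Procedure `A_i`: apply `a` exactly `i` times starting from `(Y, i, n - i + 1)`. -/
def Aproc (n i : ℕ) (y : ℕ → ℕ → ℕ) : ℕ → ℕ → ℕ := (aStep^[i] (y, i, n - i + 1)).1

/-- `Del↘(Y)` : delete the first chute. -/
def delChute (y : ℕ → ℕ → ℕ) : ℕ → ℕ → ℕ := fun i j =>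
  if 1 ≤ i ∧ 1 ≤ j then y (i + 1) j else 0

/-- `Y ∪↘ Q` : adjoin `Q` as the new topmost chute. -/
def adjChute (y : ℕ → ℕ → ℕ) (q : ℕ → ℕ) : ℕ → ℕ → ℕ := fun i j =>
  if i = 0 then 0 else if i = 1 then q j else y (i - 1) j

/-- The set whose infimum is `I(Y,k)`; `I(Y,k) < ∞` iff this set is nonempty. -/
def Iset (n : ℕ) (y : ℕ → ℕ → ℕ) (k : ℕ) : Set ℕ := {j | k ≤ j ∧ j ≤ n ∧ 0 < y 1 j}

/-- `I(Y,k)`: the smallest `j ≥ k` with `y 1 j > 0`. -/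
def Idef (n : ℕ) (y : ℕ → ℕ → ℕ) (k : ℕ) : ℕ := sInf (Iset n y k)

/-- The set whose infimum is `J(Y,k)`; `J(Y,k) < ∞` iff this set is nonempty. -/
def Jset (n : ℕ) (y : ℕ → ℕ → ℕ) (k : ℕ) : Set ℕ :=
  {j | Idef n y k < j ∧ j ≤ n ∧ y 1 j < y 2 (j - 1)}

/-- `J(Y,k)`: the smallest `j > I(Y,k)` with `y 1 j < y 2 (j-1)`. -/
def Jdef (n : ℕ) (y : ℕ → ℕ → ℕ) (k : ℕ) : ℕ := sInf (Jset n y k)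

/-- Procedure `B`, by induction on the size `n`. -/
def Bproc : ℕ → (ℕ → ℕ → ℕ) → ℕ → ((ℕ → ℕ → ℕ) × ℕ)
  | 0, y, _ => (y, 1)
  | n + 1, y, k =>
    if (Jset (n + 1) y k).Nonempty then
      let zr := Bproc n (delChute y) (Jdef (n + 1) y k - 1)
      (Lower (adjChute zr.1 (y 1)) 1 (Idef (n + 1) y k), zr.2 + 1)
    else (Lower y 1 (Idef (n + 1) y k), 1)

/-- Apply `A_m^{y_{N+1-m,m} - y_{N-m,m+1}}` for `m = 1, …, M` (innermost `A_1`). -/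
def applyAs (N : ℕ) (y : ℕ → ℕ → ℕ) : ℕ → (ℕ → ℕ → ℕ) → (ℕ → ℕ → ℕ)
  | 0, z => z
  | m + 1, z => (Aproc N (m + 1))^[y (N - m) (m + 1) - y (N - m - 1) (m + 2)] (applyAs N y m z)

/-- `Del↗(Y)` : delete the last ladder (of an array of size `n`). -/
def delLadder (n : ℕ) (y : ℕ → ℕ → ℕ) : ℕ → ℕ → ℕ := fun i j =>
  if 1 ≤ i ∧ 1 ≤ j ∧ i + j ≤ n then y i j else 0

/-- The combinatorial Fourier transform `T`. -/
def Tmap : ℕ → (ℕ → ℕ → ℕ) → (ℕ → ℕ → ℕ)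
  | 0, y => y
  | 1, y => y
  | n + 2, y =>
      applyAs (n + 2) y (n + 2) (adjChute (Tmap (n + 1) (delLadder (n + 2) y)) (fun _ => 0))

/-- Iterate procedure `B` (with `k = 1`), recording the list of produced integers `q`. -/
def Biter (n : ℕ) (y : ℕ → ℕ → ℕ) : ℕ → ((ℕ → ℕ → ℕ) × List ℕ)
  | 0 => (y, [])
  | m + 1 =>
    let p := Biter n y m
    let b := Bproc n p.1 1
    (b.1, p.2 ++ [b.2])

/-- `Y ∪↗ P` : adjoin `P` as the new bottommost ladder (result of size `N`). -/
def adjLadder (N : ℕ) (z : ℕ → ℕ → ℕ) (p : ℕ → ℕ) : ℕ → ℕ → ℕ := fun i j =>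
  if 1 ≤ i ∧ 1 ≤ j ∧ i + j = N + 1 then p j else z i j

/-- The inverse combinatorial Fourier transform `T'`. -/
def Tinv : ℕ → (ℕ → ℕ → ℕ) → (ℕ → ℕ → ℕ)
  | 0, y => y
  | 1, y => y
  | n + 2, y =>
    let r := Biter (n + 2) y (udim (n + 2) y 1)
    adjLadder (n + 2) (Tinv (n + 1) (delChute r.1)) (fun j => r.2.countP (fun q => decide (j ≤ q)))

/-- The composition `x_{i+j-1} ∘ ⋯ ∘ x_{i+1} ∘ x_i` (`j` maps, starting at vertex `i`). -/
def chainMap (w : ℕ → ℕ) (x : ∀ m : ℕ, (Fin (w m) → ℂ) →ₗ[ℂ] (Fin (w (m + 1)) → ℂ)) (i : ℕ) :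
    ∀ j : ℕ, (Fin (w i) → ℂ) →ₗ[ℂ] (Fin (w (i + j)) → ℂ)
  | 0 => LinearMap.id
  | j + 1 => (x (i + j)).comp (chainMap w x i j)

/-- `u` is a Jordan basis of type `Y` for the representation `x`. -/
def IsJordanBasis (n : ℕ) (w : ℕ → ℕ) (y : ℕ → ℕ → ℕ)
    (x : ∀ m : ℕ, (Fin (w m) → ℂ) →ₗ[ℂ] (Fin (w (m + 1)) → ℂ))
    (u : ∀ m : ℕ, ℕ → ℕ → (Fin (w m) → ℂ)) : Prop :=
  (∀ i, 1 ≤ i → i ≤ n →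
    (LinearIndependent ℂ
      (fun p : {p : ℕ × ℕ // 1 ≤ p.1 ∧ p.1 ≤ n - i + 1 ∧ 1 ≤ p.2 ∧ p.2 ≤ y i p.1} =>
        u i p.1.1 p.1.2) ∧
    Submodule.span ℂ
      (Set.range (fun p : {p : ℕ × ℕ // 1 ≤ p.1 ∧ p.1 ≤ n - i + 1 ∧ 1 ≤ p.2 ∧ p.2 ≤ y i p.1} =>
        u i p.1.1 p.1.2)) = ⊤)) ∧
  (∀ i j k, 1 ≤ i → i + 1 ≤ n → 1 ≤ j → j ≤ n - i + 1 → 1 ≤ k → k ≤ y i j →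
    x i (u i j k) = if 2 ≤ j then u (i + 1) (j - 1) k else 0)

/-- `V` is a kernel flag of type `Y` (with the convention `V i 0 = ⊥`). -/
def IsKerFlag (n : ℕ) (w : ℕ → ℕ) (y : ℕ → ℕ → ℕ)
    (V : ∀ i : ℕ, ℕ → Submodule ℂ (Fin (w i) → ℂ)) : Prop :=
  ∀ i, 1 ≤ i → i ≤ n →
    V i 0 = ⊥ ∧
    (∀ j, j ≤ n - i → V i j ≤ V i (j + 1)) ∧
    V i (n - i + 1) = ⊤ ∧
    (∀ j, 1 ≤ j → j ≤ n - i + 1 → Module.finrank ℂ (V i j) = ∑ h ∈ Finset.Icc 1 j, y i h)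

/-- The representation `x` preserves the kernel flag `V`. -/
def PreservesFlag (n : ℕ) (w : ℕ → ℕ)
    (x : ∀ m : ℕ, (Fin (w m) → ℂ) →ₗ[ℂ] (Fin (w (m + 1)) → ℂ))
    (V : ∀ i : ℕ, ℕ → Submodule ℂ (Fin (w i) → ℂ)) : Prop :=
  ∀ i, 1 ≤ i → i + 1 ≤ n → ∀ j, 1 ≤ j → j ≤ n - i + 1 → ∀ v ∈ V i j,
    (j = 1 → x i v = 0) ∧ (2 ≤ j → x i v ∈ V (i + 1) (j - 1))

/-- The flag of kernels `V i j = ker (x_{i+j-1} ∘ ⋯ ∘ x_i)`. -/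
def kerFlag (w : ℕ → ℕ) (x : ∀ m : ℕ, (Fin (w m) → ℂ) →ₗ[ℂ] (Fin (w (m + 1)) → ℂ)) :
    ∀ i : ℕ, ℕ → Submodule ℂ (Fin (w i) → ℂ) := fun i j => LinearMap.ker (chainMap w x i j)

/-- The Lie-algebra stabilizer of the flag `V` inside `𝔤(w) = ∏ End(ℂ^{w_i})`. -/
def stabFlagSub (n : ℕ) (w : ℕ → ℕ) (V : ∀ i : ℕ, ℕ → Submodule ℂ (Fin (w i) → ℂ)) :
    Submodule ℂ (∀ i : Fin n, (Fin (w (i.val + 1)) → ℂ) →ₗ[ℂ] (Fin (w (i.val + 1)) → ℂ)) where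
  carrier := {g | ∀ (i : Fin n) (j : ℕ), 1 ≤ j → j ≤ n - (i.val + 1) + 1 →
    ∀ v ∈ V (i.val + 1) j, g i v ∈ V (i.val + 1) j}
  add_mem' := by
    intro a b ha hb i j h1 h2 v hv
    simpa using (V (i.val + 1) j).add_mem (ha i j h1 h2 v hv) (hb i j h1 h2 v hv)
  zero_mem' := by
    intro i j h1 h2 v hv
    simpa using (V (i.val + 1) j).zero_mem
  smul_mem' := by
    intro c a ha i j h1 h2 v hv
    simpa using (V (i.val + 1) j).smul_mem c (ha i j h1 h2 v hv)

/-- The linear space `E(w)^V` of representations preserving the kernel flag `V`. -/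
def presFlagSub (n : ℕ) (w : ℕ → ℕ) (V : ∀ i : ℕ, ℕ → Submodule ℂ (Fin (w i) → ℂ)) :
    Submodule ℂ (∀ i : Fin (n - 1), (Fin (w (i.val + 1)) → ℂ) →ₗ[ℂ] (Fin (w (i.val + 2)) → ℂ)) where
  carrier := {x | ∀ (i : Fin (n - 1)) (j : ℕ), 1 ≤ j → j ≤ n - (i.val + 1) + 1 →
    ∀ v ∈ V (i.val + 1) j,
      (j = 1 → x i v = 0) ∧ (2 ≤ j → x i v ∈ V (i.val + 2) (j - 1))}
  add_mem' := by
    intro a b ha hb i j h1 h2 v hv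
    obtain ⟨ha1, ha2⟩ := ha i j h1 h2 v hv
    obtain ⟨hb1, hb2⟩ := hb i j h1 h2 v hv
    constructor
    · intro hj
      simp [ha1 hj, hb1 hj]
    · intro hj
      simpa using (V (i.val + 2) (j - 1)).add_mem (ha2 hj) (hb2 hj)
  zero_mem' := by
    intro i j h1 h2 v hv
    constructor
    · intro _; simp
    · intro _
      simpa using (V (i.val + 2) (j - 1)).zero_mem
  smul_mem' := by
    intro c a ha i j h1 h2 v hv
    obtain ⟨ha1, ha2⟩ := ha i j h1 h2 v hv
    constructor
    · intro hj
      simp [ha1 hj]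
    · intro hj
      simpa using (V (i.val + 2) (j - 1)).smul_mem c (ha2 hj)

end

section Helpers

lemma Kval_pos (y : ℕ → ℕ → ℕ) (i k : ℕ) : 1 ≤ Kval y i k := le_sup_right

lemma Kval_le (y : ℕ → ℕ → ℕ) (i : ℕ) {k : ℕ} (hk : 1 ≤ k) : Kval y i k ≤ k := by
  refine sup_le (Finset.sup_le ?_) hk
  intro j hj
  simp only [Finset.mem_filter, Finset.mem_Icc] at hj
  exact hj.1.2

lemma Kval_strict (y : ℕ → ℕ → ℕ) (i k : ℕ) (h2 : 2 ≤ Kval y i k) :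
    y i (Kval y i k) < y (i + 1) (Kval y i k - 1) := by
  classical
  set s := (Finset.Icc 2 k).filter (fun j => y i j < y (i + 1) (j - 1)) with hs
  have hK : Kval y i k = s.sup id ⊔ 1 := rfl
  have hsup : 2 ≤ s.sup id := by omega
  have hne : s.Nonempty := by
    by_contra h
    rw [Finset.not_nonempty_iff_eq_empty] at h
    rw [h] at hsup; simp at hsup
  obtain ⟨b, hb, hbeq⟩ := Finset.exists_mem_eq_sup s hne id
  have hb2 : 2 ≤ b := by rw [hbeq] at hsup; exact hsup
  have hKb : Kval y i k = b := by
    rw [hK, hbeq]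
    exact sup_eq_left.mpr (by simpa using hb2.trans' one_le_two)
  rw [hKb]
  simpa using (Finset.mem_filter.mp hb).2

lemma udim_Raise (n : ℕ) (z : ℕ → ℕ → ℕ) (p c : ℕ) (hc1 : 1 ≤ c) (hc2 : c ≤ n - p + 1)
    (m : ℕ) : udim n (Raise z p c) m = udim n z m + if m = p then 1 else 0 := by
  by_cases hm : m = p
  · subst hm
    rw [if_pos rfl]
    unfold udim
    have h1 : ∀ j ∈ Finset.Icc 1 (n - m + 1),
        Raise z m c m j = z m j + (if j = c then 1 else 0) := by
      intro j _
      unfold Raise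
      by_cases h : j = c <;> simp [h]
    rw [Finset.sum_congr rfl h1, Finset.sum_add_distrib,
      Finset.sum_ite_eq' (Finset.Icc 1 (n - m + 1)) c (fun _ => 1)]
    simp [Finset.mem_Icc, hc1, hc2]
  · rw [if_neg hm, add_zero]
    unfold udim
    refine Finset.sum_congr rfl fun j hj => ?_
    unfold Raise
    rw [if_neg (by tauto)]

lemma IsTri.raise (n : ℕ) {z : ℕ → ℕ → ℕ} (hz : IsTri n z) {p k : ℕ} (hp1 : 1 ≤ p)
    (hpn : p ≤ n) (hK : Kval z p k ≤ n - p + 1) : IsTri n (Raise z p (Kval z p k)) := by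
  set K := Kval z p k with hKdef
  have hK1 : 1 ≤ K := Kval_pos z p k
  have hstrict : 2 ≤ K → z p K < z (p + 1) (K - 1) := fun hK2 => Kval_strict z p k hK2
  constructor
  · intro i j hij
    have hne : ¬(i = p ∧ j = K) := by rintro ⟨rfl, rfl⟩; exact hij ⟨hp1, hpn, hK1, hK⟩
    simp only [Raise, if_neg hne]
    exact hz.1 i j hij
  · intro i j h2 hin hj1 hj2
    have base := hz.2 i j h2 hin hj1 hj2
    simp only [Raise]
    split_ifs with ha hb hb
    · obtain ⟨ha1, ha2⟩ := ha; obtain ⟨hb1, hb2⟩ := hb; omega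
    · obtain ⟨ha1, ha2⟩ := ha
      have hs := hstrict (by omega)
      have e1 : z (p + 1) (K - 1) = z i j := by congr 1 <;> omega
      rw [ha1, ha2]
      omega
    · omega
    · exact base

lemma aIter (n : ℕ) : ∀ (t i k : ℕ) (z : ℕ → ℕ → ℕ), IsTri n z → t ≤ i → i ≤ n → 1 ≤ k →
    k ≤ n - i + 1 →
    IsTri n (aStep^[t] (z, i, k)).1 ∧ (aStep^[t] (z, i, k)).2.1 = i - t ∧
      1 ≤ (aStep^[t] (z, i, k)).2.2 ∧ (aStep^[t] (z, i, k)).2.2 ≤ k ∧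
      ∀ m, udim n (aStep^[t] (z, i, k)).1 m =
        udim n z m + if i - t < m ∧ m ≤ i then 1 else 0 := by
  intro t
  induction t with
  | zero =>
    intro i k z hz _ _ hk _
    refine ⟨hz, by simp, by simpa using hk, by simp, fun m => ?_⟩
    rw [Function.iterate_zero_apply, if_neg (by omega), add_zero]
  | succ t ih =>
    intro i k z hz hti hin hk1 hk2
    have hi1 : 1 ≤ i := by omega
    set K := Kval z i k with hKdef
    have hK1 : 1 ≤ K := Kval_pos z i k
    have hKk : K ≤ k := Kval_le z i hk1
    have hstep : aStep (z, i, k) = (Raise z i K, i - 1, K) := rfl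
    rw [Function.iterate_succ_apply, hstep]
    have hz' : IsTri n (Raise z i K) := hz.raise n hi1 hin (le_trans hKk hk2)
    have hrec := ih (i - 1) K (Raise z i K) hz' (by omega) (by omega) hK1 (by omega)
    obtain ⟨h1, h2, h3, h4, h5⟩ := hrec
    refine ⟨h1, by omega, h3, by omega, fun m => ?_⟩
    rw [h5 m, udim_Raise n z i K hK1 (le_trans hKk hk2) m]
    split_ifs <;> omega

lemma Aproc_spec (n i : ℕ) (z : ℕ → ℕ → ℕ) (hz : IsTri n z) (hi1 : 1 ≤ i) (hin : i ≤ n) :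
    IsTri n (Aproc n i z) ∧
      ∀ m, udim n (Aproc n i z) m = udim n z m + if 1 ≤ m ∧ m ≤ i then 1 else 0 := by
  have hk1 : 1 ≤ n - i + 1 := by omega
  have h := aIter n i i (n - i + 1) z hz le_rfl hin hk1 le_rfl
  unfold Aproc
  refine ⟨h.1, fun m => ?_⟩
  rw [h.2.2.2.2 m]
  congr 1
  split_ifs <;> omega

lemma Aproc_iter_spec (n i : ℕ) (hi1 : 1 ≤ i) (hin : i ≤ n) :
    ∀ (e : ℕ) (z : ℕ → ℕ → ℕ), IsTri n z →
    IsTri n ((Aproc n i)^[e] z) ∧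
      ∀ m, udim n ((Aproc n i)^[e] z) m =
        udim n z m + e * if 1 ≤ m ∧ m ≤ i then 1 else 0 := by
  intro e
  induction e with
  | zero => intro z hz; exact ⟨hz, fun m => by simp⟩
  | succ e ih =>
    intro z hz
    rw [Function.iterate_succ_apply]
    obtain ⟨hz1, hz2⟩ := Aproc_spec n i z hz hi1 hin
    obtain ⟨h1, h2⟩ := ih (Aproc n i z) hz1
    refine ⟨h1, fun m => ?_⟩
    rw [h2 m, hz2 m]
    ring

lemma applyAs_spec (N : ℕ) (y : ℕ → ℕ → ℕ) (hy : IsTri N y) :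
    ∀ (M : ℕ), M ≤ N → ∀ (z : ℕ → ℕ → ℕ), IsTri N z →
    IsTri N (applyAs N y M z) ∧
      ∀ c, 1 ≤ c → udim N (applyAs N y M z) c =
        udim N z c + if c ≤ M then y (N + 1 - c) c - y (N - M) (M + 1) else 0 := by
  have hanti : ∀ a b, 1 ≤ a → a ≤ b → b ≤ N + 1 → y (N + 1 - b) b ≤ y (N + 1 - a) a := by
    intro a b ha hab
    induction b, hab using Nat.le_induction with
    | base => intro _; exact le_rfl
    | succ b hb ih =>
      intro hbN
      have step : y (N + 1 - (b + 1)) (b + 1) ≤ y (N + 1 - b) b := by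
        by_cases hbN' : b ≤ N - 1
        · have := hy.2 (N + 1 - b) b (by omega) (by omega) (by omega) (by omega)
          have e1 : N + 1 - b - 1 = N + 1 - (b + 1) := by omega
          rwa [e1] at this
        · have hb' : b = N := by omega
          have : y (N + 1 - (b + 1)) (b + 1) = 0 := hy.1 _ _ (by omega)
          omega
      exact le_trans step (ih (by omega))
  intro M
  induction M with
  | zero =>
    intro _ z hz
    refine ⟨hz, fun c hc => ?_⟩
    rw [if_neg (by omega), add_zero]
    rfl
  | succ M ih =>
    intro hMN z hz
    obtain ⟨h1, h2⟩ := ih (by omega) z hz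
    obtain ⟨g1, g2⟩ := Aproc_iter_spec N (M + 1) (by omega) hMN
      (y (N - M) (M + 1) - y (N - M - 1) (M + 2)) (applyAs N y M z) h1
    have hdef : applyAs N y (M + 1) z =
        (Aproc N (M + 1))^[y (N - M) (M + 1) - y (N - M - 1) (M + 2)] (applyAs N y M z) := rfl
    rw [hdef]
    refine ⟨g1, fun c hc => ?_⟩
    rw [g2 c, h2 c hc]
    have a1 : N + 1 - (M + 2) = N - M - 1 := by omega
    have a2 : N + 1 - (M + 1) = N - M := by omega
    have hO1 : y (N - M - 1) (M + 2) ≤ y (N - M) (M + 1) := by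
      have h := hanti (M + 1) (M + 2) (by omega) (by omega) (by omega)
      rwa [a1, a2] at h
    rw [show N - (M + 1) = N - M - 1 from by omega]
    rw [show (M + 1 + 1) = M + 2 from rfl]
    by_cases hc1 : c ≤ M
    · have hO2 : y (N - M) (M + 1) ≤ y (N + 1 - c) c := by
        have h := hanti c (M + 1) hc (by omega) (by omega)
        rwa [a2] at h
      rw [if_pos hc1, if_pos (show c ≤ M + 1 by omega),
        if_pos (show 1 ≤ c ∧ c ≤ M + 1 from ⟨hc, by omega⟩)]
      omega
    · by_cases hc2 : c = M + 1
      · subst hc2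
        rw [if_neg hc1, if_pos le_rfl, if_pos (⟨hc, le_rfl⟩ : 1 ≤ M + 1 ∧ M + 1 ≤ M + 1), a2]
        omega
      · rw [if_neg hc1, if_neg (show ¬ c ≤ M + 1 by omega), if_neg (by omega)]
        omega

lemma delLadder_spec (n : ℕ) (y : ℕ → ℕ → ℕ) (hy : IsTri (n + 1) y) :
    IsTri n (delLadder (n + 1) y) ∧
      ∀ i, 1 ≤ i → i ≤ n → udim (n + 1) y i = udim n (delLadder (n + 1) y) i + y i (n + 2 - i) := by
  constructor
  · constructor
    · intro i j hij
      unfold delLadder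
      split_ifs with h
      · exact hy.1 i j (by omega)
      · rfl
    · intro i j h2 hin hj1 hj2
      unfold delLadder
      have hij : i + j ≤ n + 1 := by omega
      rw [if_pos ⟨by omega, by omega, by omega⟩, if_pos ⟨by omega, by omega, by omega⟩]
      exact hy.2 i j h2 (by omega) hj1 (by omega)
  · intro i hi1 hin
    unfold udim
    have hr1 : n + 1 - i + 1 = (n - i + 1) + 1 := by omega
    rw [hr1, Finset.sum_Icc_succ_top (by omega : 1 ≤ n - i + 1 + 1)]
    have hlast : n - i + 1 + 1 = n + 2 - i := by omega
    rw [hlast]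
    congr 1
    refine Finset.sum_congr rfl fun j hj => ?_
    simp only [Finset.mem_Icc] at hj
    unfold delLadder
    rw [if_pos ⟨hi1, by omega, by omega⟩]

lemma adjChute_zero_spec (n : ℕ) (z : ℕ → ℕ → ℕ) (hz : IsTri n z) :
    IsTri (n + 1) (adjChute z (fun _ => 0)) ∧
      udim (n + 1) (adjChute z (fun _ => 0)) 1 = 0 ∧
      ∀ i, 2 ≤ i → i ≤ n + 1 → udim (n + 1) (adjChute z (fun _ => 0)) i = udim n z (i - 1) := by
  refine ⟨⟨?_, ?_⟩, ?_, ?_⟩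
  · intro i j hij
    unfold adjChute
    split_ifs with h1 h2
    · rfl
    · rfl
    · exact hz.1 (i - 1) j (by omega)
  · intro i j h2 hin hj1 hj2
    unfold adjChute
    rw [if_neg (by omega : ¬ i = 0)]
    by_cases hi2 : i = 2
    · subst hi2
      rw [if_neg (by omega : ¬ (2:ℕ) - 1 = 0), if_pos rfl]
      exact Nat.zero_le _
    · rw [if_neg (by omega : ¬ i - 1 = 0), if_neg (by omega : ¬ i - 1 = 1),
        if_neg (by omega : ¬ i = 1)]
      exact hz.2 (i - 1) j (by omega) (by omega) hj1 (by omega)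
  · unfold udim adjChute
    refine Finset.sum_eq_zero fun j hj => ?_
    rw [if_neg one_ne_zero, if_pos rfl]
  · intro i h2 hin
    unfold udim adjChute
    have hr : n + 1 - i + 1 = n - (i - 1) + 1 := by omega
    rw [hr]
    refine Finset.sum_congr rfl fun j hj => ?_
    rw [if_neg (by omega : ¬ i = 0), if_neg (by omega : ¬ i = 1)]

lemma Tmap_spec : ∀ n, 1 ≤ n → ∀ (w : ℕ → ℕ) (y : ℕ → ℕ → ℕ), InP n w y →
    InP n (fun i => w (n + 1 - i)) (Tmap n y) := by
  intro n
  induction n with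
  | zero => omega
  | succ m ih =>
    intro _ w y hy
    match m, ih with
    | 0, _ =>
      refine ⟨hy.1, fun i hi1 hin => ?_⟩
      have : i = 1 := by omega
      subst this
      exact hy.2 1 le_rfl le_rfl
    | (k + 1), ih =>
      set N := k + 2 with hN
      obtain ⟨hyt, hyd⟩ := hy
      have hdel := delLadder_spec (k + 1) y hyt
      have hinner : InP (k + 1) (fun i => udim (k + 1) (delLadder N y) i) (delLadder N y) :=
        ⟨hdel.1, fun i _ _ => rfl⟩
      obtain ⟨hTt, hTd⟩ := ih (by omega) _ _ hinner
      have hTd' : ∀ i', 1 ≤ i' → i' ≤ k + 1 →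
          udim (k + 1) (Tmap (k + 1) (delLadder N y)) i' =
            udim (k + 1) (delLadder N y) (k + 1 + 1 - i') := fun a b c => hTd a b c
      obtain ⟨hat, ha1, hai⟩ := adjChute_zero_spec (k + 1) _ hTt
      rw [show (k : ℕ) + 1 + 1 = N from by omega] at ha1 hai
      obtain ⟨hft, hfd⟩ := applyAs_spec N y hyt N le_rfl _ hat
      have hTdef : Tmap N y =
          applyAs N y N (adjChute (Tmap (k + 1) (delLadder N y)) (fun _ => 0)) := rfl
      refine ⟨by rw [hTdef]; exact hft, fun i hi1 hin => ?_⟩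
      show udim N (Tmap N y) i = w (N + 1 - i)
      rw [hTdef, hfd i hi1, if_pos hin]
      have hzero : y 0 (N + 1) = 0 := hyt.1 _ _ (by omega)
      rw [Nat.sub_self, hzero, Nat.sub_zero]
      by_cases hione : i = 1
      · subst hione
        rw [ha1, zero_add]
        have hudN : udim N y N = y N 1 := by
          unfold udim
          rw [show N - N + 1 = 1 from by omega]
          simp
        rw [show N + 1 - 1 = N from by omega, ← hudN]
        exact hyd N (by omega) le_rfl
      · have hi2 : 2 ≤ i := by omega
        rw [hai i hi2 hin, hTd' (i - 1) (by omega) (by omega),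
          show (k : ℕ) + 1 + 1 - (i - 1) = N + 1 - i from by omega]
        have hsplit := hdel.2 (N + 1 - i) (by omega) (by omega)
        rw [show (k : ℕ) + 1 + 1 = N from by omega,
          show (k : ℕ) + 1 + 2 - (N + 1 - i) = i from by omega] at hsplit
        have hw := hyd (N + 1 - i) (by omega) (by omega)
        omega

lemma delChute_spec (n : ℕ) (y : ℕ → ℕ → ℕ) (hy : IsTri (n + 1) y) :
    IsTri n (delChute y) ∧ ∀ i, 1 ≤ i → udim n (delChute y) i = udim (n + 1) y (i + 1) := by
  refine ⟨⟨?_, ?_⟩, ?_⟩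
  · intro i j hij
    unfold delChute
    split_ifs with h
    · exact hy.1 (i + 1) j (by omega)
    · rfl
  · intro i j h2 hin hj1 hj2
    unfold delChute
    rw [if_pos ⟨by omega, by omega⟩, if_pos ⟨by omega, by omega⟩]
    have := hy.2 (i + 1) j (by omega) (by omega) hj1 (by omega)
    rw [show i + 1 - 1 = i from by omega] at this
    rwa [show i - 1 + 1 = i from by omega]
  · intro i hi1
    unfold udim delChute
    rw [show n + 1 - (i + 1) + 1 = n - i + 1 from by omega]
    refine Finset.sum_congr rfl fun j hj => ?_
    simp only [Finset.mem_Icc] at hj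
    rw [if_pos ⟨hi1, by omega⟩]

lemma IsTri.lower1 (n : ℕ) {y : ℕ → ℕ → ℕ} (hy : IsTri n y) (c : ℕ) (hc1 : 1 ≤ c)
    (hcn : c ≤ n) : IsTri n (Lower y 1 c) := by
  constructor
  · intro i j hij
    unfold Lower
    split_ifs with h
    · simp [hy.1 i j hij]
    · exact hy.1 i j hij
  · intro i j h2 hin hj1 hj2
    unfold Lower
    rw [if_neg (by omega : ¬ (i = 1 ∧ j = c))]
    split_ifs with h
    · exact le_trans (Nat.sub_le _ _) (hy.2 i j h2 hin hj1 hj2)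
    · exact hy.2 i j h2 hin hj1 hj2

lemma udim_Lower (n : ℕ) (y : ℕ → ℕ → ℕ) (p c : ℕ) (hc1 : 1 ≤ c) (hc2 : c ≤ n - p + 1)
    (hpos : 1 ≤ y p c) (m : ℕ) :
    udim n (Lower y p c) m + (if m = p then 1 else 0) = udim n y m := by
  have hR : Raise (Lower y p c) p c = y := by
    funext a b
    unfold Raise Lower
    by_cases h : a = p ∧ b = c
    · rw [if_pos h, if_pos h]
      obtain ⟨rfl, rfl⟩ := h
      omega
    · rw [if_neg h, if_neg h]
  conv_rhs => rw [← hR]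
  exact (udim_Raise n (Lower y p c) p c hc1 hc2 m).symm

lemma udim_out (n : ℕ) {z : ℕ → ℕ → ℕ} (hz : IsTri n z) {m : ℕ} (hm : n < m) :
    udim n z m = 0 := by
  unfold udim
  rw [show n - m + 1 = 1 from by omega, Finset.Icc_self, Finset.sum_singleton]
  exact hz.1 m 1 (by omega)

lemma adjChute_spec (n : ℕ) (z : ℕ → ℕ → ℕ) (q : ℕ → ℕ) (hz : IsTri n z)
    (hq0 : ∀ j, ¬(1 ≤ j ∧ j ≤ n + 1) → q j = 0)
    (hqz : ∀ j, 1 ≤ j → j ≤ n → q (j + 1) ≤ z 1 j) :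
    IsTri (n + 1) (adjChute z q) ∧
      udim (n + 1) (adjChute z q) 1 = ∑ j ∈ Finset.Icc 1 (n + 1), q j ∧
      ∀ i, 2 ≤ i → i ≤ n + 1 → udim (n + 1) (adjChute z q) i = udim n z (i - 1) := by
  refine ⟨⟨?_, ?_⟩, ?_, ?_⟩
  · intro i j hij
    unfold adjChute
    split_ifs with h1 h2
    · rfl
    · subst h2
      exact hq0 j (by omega)
    · exact hz.1 (i - 1) j (by omega)
  · intro i j h2 hin hj1 hj2
    unfold adjChute
    rw [if_neg (by omega : ¬ i = 0)]
    by_cases hi2 : i = 2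
    · subst hi2
      rw [if_neg (by omega : ¬ (2:ℕ) - 1 = 0), if_pos rfl]
      rw [if_neg (by omega : ¬ (2:ℕ) = 1)]
      exact hqz j hj1 (by omega)
    · rw [if_neg (by omega : ¬ i - 1 = 0), if_neg (by omega : ¬ i - 1 = 1),
        if_neg (by omega : ¬ i = 1)]
      exact hz.2 (i - 1) j (by omega) (by omega) hj1 (by omega)
  · unfold udim adjChute
    rw [show n + 1 - 1 + 1 = n + 1 from by omega]
    refine Finset.sum_congr rfl fun j hj => ?_
    rw [if_neg one_ne_zero, if_pos rfl]
  · intro i h2 hin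
    unfold udim adjChute
    rw [show n + 1 - i + 1 = n - (i - 1) + 1 from by omega]
    refine Finset.sum_congr rfl fun j hj => ?_
    rw [if_neg (by omega : ¬ i = 0), if_neg (by omega : ¬ i = 1)]

lemma Iset_mem (n : ℕ) (y : ℕ → ℕ → ℕ) (k : ℕ) (h : (Iset n y k).Nonempty) :
    k ≤ Idef n y k ∧ Idef n y k ≤ n ∧ 0 < y 1 (Idef n y k) :=
  Nat.sInf_mem h

lemma Bproc_spec : ∀ (n : ℕ) (y : ℕ → ℕ → ℕ) (k : ℕ), IsTri n y → 1 ≤ k → k ≤ n →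
    (Iset n y k).Nonempty →
    IsTri n (Bproc n y k).1 ∧ 1 ≤ (Bproc n y k).2 ∧ (Bproc n y k).2 ≤ n ∧
      (∀ m, 1 ≤ m → m ≤ n →
        udim n (Bproc n y k).1 m + (if m ≤ (Bproc n y k).2 then 1 else 0) = udim n y m) ∧
      (∀ j, (Bproc n y k).1 1 j = y 1 j - if j = Idef n y k then 1 else 0) := by
  intro n
  induction n with
  | zero => intro y k _ h1 h2 _; omega
  | succ n ih =>
    intro y k hy hk1 hkn hne
    obtain ⟨hIk, hIn, hIpos⟩ := Iset_mem (n + 1) y k hne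
    by_cases hJ : (Jset (n + 1) y k).Nonempty
    · -- J-case
      have hJmem : Jdef (n + 1) y k ∈ Jset (n + 1) y k := Nat.sInf_mem hJ
      obtain ⟨hJI, hJn, hJlt⟩ := hJmem
      have hJ2 : 2 ≤ Jdef (n + 1) y k := by omega
      obtain ⟨hdt, hdu⟩ := delChute_spec n y hy
      have hmem : Jdef (n + 1) y k - 1 ∈ Iset n (delChute y) (Jdef (n + 1) y k - 1) := by
        refine ⟨le_rfl, by omega, ?_⟩
        unfold delChute
        rw [if_pos ⟨by omega, by omega⟩]
        show 0 < y 2 (Jdef (n + 1) y k - 1)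
        omega
      have hIdc : Idef n (delChute y) (Jdef (n + 1) y k - 1) = Jdef (n + 1) y k - 1 := by
        refine le_antisymm (Nat.sInf_le hmem) ?_
        exact (Nat.sInf_mem (⟨_, hmem⟩ :
          (Iset n (delChute y) (Jdef (n + 1) y k - 1)).Nonempty)).1
      obtain ⟨ht', hq1', hqn', hu', hc1'⟩ := ih (delChute y) (Jdef (n + 1) y k - 1) hdt
        (by omega) (by omega) ⟨_, hmem⟩
      set r := Bproc n (delChute y) (Jdef (n + 1) y k - 1) with hrdef
      have hBdef : Bproc (n + 1) y k =
          (Lower (adjChute r.1 (y 1)) 1 (Idef (n + 1) y k), r.2 + 1) := by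
        rw [hrdef, Bproc, if_pos hJ]
      have hadjH : ∀ j, 1 ≤ j → j ≤ n → y 1 (j + 1) ≤ r.1 1 j := by
        intro j hj1 hjn
        rw [hc1' j, hIdc]
        unfold delChute
        rw [if_pos ⟨le_rfl, hj1⟩]
        show y 1 (j + 1) ≤ y 2 j - _
        by_cases hjJ : j = Jdef (n + 1) y k - 1
        · rw [if_pos hjJ]
          subst hjJ
          rw [show Jdef (n + 1) y k - 1 + 1 = Jdef (n + 1) y k from by omega]
          omega
        · rw [if_neg hjJ, Nat.sub_zero]
          exact hy.2 2 j le_rfl (by omega) hj1 (by omega)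
      obtain ⟨hadjT, hadj1, hadji⟩ := adjChute_spec n r.1 (y 1) ht'
        (fun j hj => hy.1 1 j (by omega)) hadjH
      have hchute1 : ∀ j, adjChute r.1 (y 1) 1 j = y 1 j := fun j => by
        unfold adjChute; rw [if_neg one_ne_zero, if_pos rfl]
      have hadj1' : udim (n + 1) (adjChute r.1 (y 1)) 1 = udim (n + 1) y 1 := by
        rw [hadj1]
        unfold udim
        rw [show n + 1 - 1 + 1 = n + 1 from by omega]
      rw [hBdef]
      simp only
      have hlowT : IsTri (n + 1) (Lower (adjChute r.1 (y 1)) 1 (Idef (n + 1) y k)) :=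
        hadjT.lower1 (n + 1) (Idef (n + 1) y k) (by omega) (by omega)
      refine ⟨hlowT, by omega, by omega, ?_, ?_⟩
      · intro m hm1 hmn
        have hlow := udim_Lower (n + 1) (adjChute r.1 (y 1)) 1 (Idef (n + 1) y k)
          (by omega) (by omega) (by rw [hchute1]; omega) m
        by_cases hm : m = 1
        · subst hm
          rw [if_pos (by omega : (1:ℕ) ≤ r.2 + 1)]
          rw [if_pos rfl] at hlow
          omega
        · rw [if_neg hm, add_zero] at hlow
          rw [hlow, hadji m (by omega) hmn]
          have hrec := hu' (m - 1) (by omega) (by omega)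
          rw [hdu (m - 1) (by omega), show m - 1 + 1 = m from by omega] at hrec
          rw [← hrec]
          congr 1
          split_ifs <;> omega
      · intro j
        show Lower (adjChute r.1 (y 1)) 1 (Idef (n + 1) y k) 1 j = _
        unfold Lower
        by_cases h : j = Idef (n + 1) y k
        · rw [if_pos ⟨rfl, h⟩, hchute1 j, if_pos h]
        · rw [if_neg (fun hh => h hh.2), hchute1 j, if_neg h, Nat.sub_zero]
    · -- no-J case
      have hBdef : Bproc (n + 1) y k = (Lower y 1 (Idef (n + 1) y k), 1) := by
        rw [Bproc, if_neg hJ]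
      rw [hBdef]
      simp only
      refine ⟨hy.lower1 (n + 1) (Idef (n + 1) y k) (by omega) (by omega), le_rfl, by omega,
        ?_, ?_⟩
      · intro m hm1 hmn
        have hlow := udim_Lower (n + 1) y 1 (Idef (n + 1) y k) (by omega) (by omega)
          (by omega) m
        by_cases hm : m = 1
        · subst hm
          rw [if_pos le_rfl]
          rw [if_pos rfl] at hlow
          omega
        · rw [if_neg hm, add_zero] at hlow
          rw [if_neg (by omega : ¬ m ≤ 1), add_zero]
          exact hlow
      · intro j
        show Lower y 1 (Idef (n + 1) y k) 1 j = _
        unfold Lower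
        by_cases h : j = Idef (n + 1) y k
        · rw [if_pos ⟨rfl, h⟩, if_pos h]
        · rw [if_neg (fun hh => h hh.2), if_neg h, Nat.sub_zero]

lemma Biter_spec (N : ℕ) (hN : 1 ≤ N) (y : ℕ → ℕ → ℕ) (hy : IsTri N y) :
    ∀ m, m ≤ udim N y 1 →
      IsTri N (Biter N y m).1 ∧ (Biter N y m).2.length = m ∧
      (∀ q ∈ (Biter N y m).2, 1 ≤ q ∧ q ≤ N) ∧
      ∀ i, 1 ≤ i → i ≤ N →
        udim N (Biter N y m).1 i + (Biter N y m).2.countP (fun q => decide (i ≤ q)) =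
          udim N y i := by
  intro m
  induction m with
  | zero =>
    intro _
    refine ⟨hy, rfl, fun q hq => ?_, fun i _ _ => ?_⟩
    · rw [show Biter N y 0 = (y, []) from rfl] at hq
      simp at hq
    · rw [show Biter N y 0 = (y, []) from rfl]
      simp
  | succ m ih =>
    intro hm
    obtain ⟨ht, hlen, hqb, hu⟩ := ih (by omega)
    set P := Biter N y m with hPdef
    have hcount1 : P.2.countP (fun q => decide (1 ≤ q)) = m := by
      rw [← hlen]
      exact List.countP_eq_length.mpr fun a ha => by
        simpa using (hqb a ha).1
    have hpos : 0 < udim N P.1 1 := by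
      have := hu 1 le_rfl hN
      rw [hcount1] at this
      omega
    have hne : (Iset N P.1 1).Nonempty := by
      by_contra hcon
      rw [Set.not_nonempty_iff_eq_empty] at hcon
      have hz : ∀ j ∈ Finset.Icc 1 N, P.1 1 j = 0 := by
        intro j hj
        simp only [Finset.mem_Icc] at hj
        by_contra hzz
        have : j ∈ Iset N P.1 1 := ⟨hj.1, hj.2, by omega⟩
        rw [hcon] at this
        exact this
      have : udim N P.1 1 = 0 := by
        unfold udim
        rw [show N - 1 + 1 = N from by omega]
        exact Finset.sum_eq_zero hz
      omega
    obtain ⟨hbt, hbq1, hbqN, hbu, _⟩ := Bproc_spec N P.1 1 ht le_rfl hN hne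
    have hBdef : Biter N y (m + 1) = ((Bproc N P.1 1).1, P.2 ++ [(Bproc N P.1 1).2]) := rfl
    rw [hBdef]
    refine ⟨hbt, by simp [hlen], ?_, ?_⟩
    · intro q hq
      simp only [List.mem_append, List.mem_singleton] at hq
      rcases hq with hq | hq
      · exact hqb q hq
      · subst hq; exact ⟨hbq1, hbqN⟩
    · intro i hi1 hiN
      simp only [List.countP_append, List.countP_cons, List.countP_nil]
      have hstep := hbu i hi1 hiN
      have hold := hu i hi1 hiN
      by_cases hle : i ≤ (Bproc N P.1 1).2
      · rw [if_pos hle] at hstep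
        simp only [decide_eq_true_eq]
        rw [if_pos hle]
        omega
      · rw [if_neg hle] at hstep
        simp only [decide_eq_true_eq]
        rw [if_neg hle]
        omega

lemma adjLadder_spec (n : ℕ) (hn : 1 ≤ n) (z : ℕ → ℕ → ℕ) (p : ℕ → ℕ) (hz : IsTri n z)
    (hp : ∀ j, 1 ≤ j → j ≤ n → p (j + 1) ≤ p j) :
    IsTri (n + 1) (adjLadder (n + 1) z p) ∧
      (∀ i, 1 ≤ i → i ≤ n →
        udim (n + 1) (adjLadder (n + 1) z p) i = udim n z i + p (n + 2 - i)) ∧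
      udim (n + 1) (adjLadder (n + 1) z p) (n + 1) = p 1 := by
  refine ⟨⟨?_, ?_⟩, ?_, ?_⟩
  · intro i j hij
    unfold adjLadder
    split_ifs with h
    · exfalso; omega
    · exact hz.1 i j (by omega)
  · intro i j h2 hin hj1 hj2
    unfold adjLadder
    by_cases hsum : i + j = n + 1 + 1
    · rw [if_pos ⟨by omega, by omega, by omega⟩, if_pos ⟨by omega, by omega, hsum⟩]
      exact hp j hj1 (by omega)
    · rw [if_neg (by omega : ¬(1 ≤ i - 1 ∧ 1 ≤ j + 1 ∧ i - 1 + (j + 1) = n + 1 + 1)),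
        if_neg (by omega : ¬(1 ≤ i ∧ 1 ≤ j ∧ i + j = n + 1 + 1))]
      exact hz.2 i j h2 (by omega) hj1 (by omega)
  · intro i hi1 hin
    unfold udim
    rw [show n + 1 - i + 1 = (n - i + 1) + 1 from by omega,
      Finset.sum_Icc_succ_top (by omega : 1 ≤ n - i + 1 + 1)]
    congr 1
    · refine Finset.sum_congr rfl fun j hj => ?_
      simp only [Finset.mem_Icc] at hj
      unfold adjLadder
      rw [if_neg (by omega : ¬(1 ≤ i ∧ 1 ≤ j ∧ i + j = n + 1 + 1))]
    · unfold adjLadder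
      rw [if_pos ⟨hi1, by omega, by omega⟩]
      congr 1
      omega
  · unfold udim
    rw [show n + 1 - (n + 1) + 1 = 1 from by omega, Finset.Icc_self, Finset.sum_singleton]
    unfold adjLadder
    rw [if_pos ⟨by omega, le_rfl, by omega⟩]

lemma Tinv_spec : ∀ n, 1 ≤ n → ∀ (w : ℕ → ℕ) (y : ℕ → ℕ → ℕ), InP n w y →
    InP n (fun i => w (n + 1 - i)) (Tinv n y) := by
  intro n
  induction n with
  | zero => omega
  | succ m ih =>
    intro _ w y hy
    match m, ih with
    | 0, _ =>
      refine ⟨hy.1, fun i hi1 hin => ?_⟩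
      have : i = 1 := by omega
      subst this
      exact hy.2 1 le_rfl le_rfl
    | (k + 1), ih =>
      set N := k + 2 with hN
      obtain ⟨hyt, hyd⟩ := hy
      obtain ⟨hbt, hlen, hqb, hbu⟩ :=
        Biter_spec N (by omega) y hyt (udim N y 1) le_rfl
      set r := Biter N y (udim N y 1) with hrdef
      have hTdef : Tinv N y =
          adjLadder N (Tinv (k + 1) (delChute r.1))
            (fun j => r.2.countP (fun q => decide (j ≤ q))) := rfl
      obtain ⟨hdt, hdu⟩ := delChute_spec (k + 1) r.1 hbt
      have hinner : InP (k + 1) (fun i => udim (k + 1) (delChute r.1) i) (delChute r.1) :=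
        ⟨hdt, fun i _ _ => rfl⟩
      obtain ⟨hTt, hTd⟩ := ih (by omega) _ _ hinner
      have hTd' : ∀ i', 1 ≤ i' → i' ≤ k + 1 →
          udim (k + 1) (Tinv (k + 1) (delChute r.1)) i' =
            udim (k + 1) (delChute r.1) (k + 1 + 1 - i') := fun a b c => hTd a b c
      have hpmono : ∀ j, 1 ≤ j → j ≤ k + 1 →
          r.2.countP (fun q => decide (j + 1 ≤ q)) ≤ r.2.countP (fun q => decide (j ≤ q)) := by
        intro j _ _
        exact List.countP_mono_left fun a _ h => by
          simp only [decide_eq_true_eq] at *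
          omega
      obtain ⟨hLt, hLu, hLtop⟩ := adjLadder_spec (k + 1) (by omega)
        (Tinv (k + 1) (delChute r.1)) (fun j => r.2.countP (fun q => decide (j ≤ q)))
        hTt (fun j hj1 hj2 => hpmono j hj1 hj2)
      rw [show (k : ℕ) + 1 + 2 = N + 1 from by omega] at hLu
      rw [show (k : ℕ) + 1 + 1 = N from by omega] at hLt hLu hLtop
      have hcount1 : r.2.countP (fun q => decide (1 ≤ q)) = udim N y 1 := by
        rw [← hlen]
        exact List.countP_eq_length.mpr fun a ha => by simpa using (hqb a ha).1
      refine ⟨by rw [hTdef]; exact hLt, fun i hi1 hin => ?_⟩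
      show udim N (Tinv N y) i = w (N + 1 - i)
      rw [hTdef]
      by_cases hitop : i = N
      · subst hitop
        rw [hLtop, hcount1, hyd 1 le_rfl (by omega)]
        congr 1
        omega
      · have hik : i ≤ k + 1 := by omega
        have hfin := hbu (N + 1 - i) (by omega) (by omega)
        rw [hyd (N + 1 - i) (by omega) (by omega)] at hfin
        rw [hLu i hi1 hik, hTd' i hi1 hik,
          show (k : ℕ) + 1 + 1 - i = N - i from by omega,
          hdu (N - i) (by omega),
          show (k : ℕ) + 1 + 1 = N from by omega,
          show N - i + 1 = N + 1 - i from by omega]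
        exact hfin

end Helpers

/-- If `udim Y = w` then `udim (T Y) = w*` and `udim (T' Y) = w*`;
in particular `T` and `T'` restrict to maps `P(w) → P(w*)`. -/
theorem Tmap_Tinv_mem_P_reverse (n : ℕ) (hn : 1 ≤ n) (w : ℕ → ℕ)
    (y : ℕ → ℕ → ℕ) (hy : InP n w y) :
    InP n (fun i => w (n + 1 - i)) (Tmap n y) ∧
      InP n (fun i => w (n + 1 - i)) (Tinv n y) :=
  ⟨Tmap_spec n hn w y hy, Tinv_spec n hn w y hy⟩
end

section
/- The maps T : P(w) → P(w*) and T' : P(w*) → P(w) are both bijections, and they are inverse to one another; specifically T ∘ T' is the identity on P(w*), and since |P(w)| = |P(w*)|, T' ∘ T is also the identity. -/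
open scoped BigOperators Classical

namespace CFT

/-! ### Kval lemmas -/

lemma Kval_pos (y : ℕ → ℕ → ℕ) (i k : ℕ) : 1 ≤ Kval y i k := le_sup_right

lemma Kval_le (y : ℕ → ℕ → ℕ) (i k : ℕ) (hk : 1 ≤ k) : Kval y i k ≤ k := by
  refine sup_le (Finset.sup_le fun j hj => ?_) hk
  exact (Finset.mem_Icc.1 (Finset.mem_filter.1 hj).1).2

lemma Kval_max {y : ℕ → ℕ → ℕ} {i k j : ℕ} (h1 : Kval y i k < j) (h2 : j ≤ k) :
    ¬ y i j < y (i + 1) (j - 1) := by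
  intro hcon
  have hj2 : 2 ≤ j := lt_of_le_of_lt (Kval_pos y i k) h1
  have hmem : j ∈ (Finset.Icc 2 k).filter (fun j => y i j < y (i + 1) (j - 1)) := by
    simp only [Finset.mem_filter, Finset.mem_Icc]
    exact ⟨⟨hj2, h2⟩, hcon⟩
  have : j ≤ Kval y i k :=
    le_trans (Finset.le_sup (f := id) hmem) le_sup_left
  omega

lemma Kval_mem {y : ℕ → ℕ → ℕ} {i k : ℕ} (h : 2 ≤ Kval y i k) :
    y i (Kval y i k) < y (i + 1) (Kval y i k - 1) := by
  classical
  set s := (Finset.Icc 2 k).filter (fun j => y i j < y (i + 1) (j - 1)) with hs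
  have hK : Kval y i k = s.sup id ⊔ 1 := rfl
  have h2 : 2 ≤ s.sup id := by
    by_contra hlt
    push_neg at hlt
    have hx : s.sup id ⊔ 1 = 1 := by
      have : s.sup id ≤ 1 := by omega
      exact sup_eq_right.2 this
    rw [hK, hx] at h; omega
  have hne : s.Nonempty := by
    by_contra hne
    rw [Finset.not_nonempty_iff_eq_empty] at hne
    rw [hne] at h2; simp at h2
  obtain ⟨b, hb, hbe⟩ := Finset.exists_mem_eq_sup s hne id
  have hKs : Kval y i k = b := by
    rw [hK, sup_eq_left.2 (by omega : 1 ≤ s.sup id), hbe]; rfl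
  rw [hKs]
  exact (Finset.mem_filter.1 hb).2

/-! ### the raise path `pcol` and raised array `pres` -/

def pcol : (ℕ → ℕ → ℕ) → ℕ → ℕ → ℕ → ℕ
  | _, 0, _, _ => 0
  | Z, i + 1, k, r =>
    if r = i + 1 then Kval Z (i + 1) k
    else pcol (Raise Z (i + 1) (Kval Z (i + 1) k)) i (Kval Z (i + 1) k) r

def pres : (ℕ → ℕ → ℕ) → ℕ → ℕ → (ℕ → ℕ → ℕ)
  | Z, 0, _ => Z
  | Z, i + 1, k => pres (Raise Z (i + 1) (Kval Z (i + 1) k)) i (Kval Z (i + 1) k)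

lemma iter_aStep : ∀ (i : ℕ) (Z : ℕ → ℕ → ℕ) (k : ℕ),
    aStep^[i] (Z, i, k) = (pres Z i k, 0, if i = 0 then k else pcol Z i k 1) := by
  intro i
  induction i with
  | zero => intro Z k; simp [pres]
  | succ i ih =>
    intro Z k
    have h1 : aStep (Z, i + 1, k) =
        (Raise Z (i + 1) (Kval Z (i + 1) k), i, Kval Z (i + 1) k) := by
      simp [aStep]
    rw [Function.iterate_succ_apply, h1, ih]
    rcases Nat.eq_zero_or_pos i with hi | hi
    · subst hi
      simp [pres, pcol]
    · have hne : ¬ (1 : ℕ) = i + 1 := by omega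
      simp only [pres, pcol, if_neg (by omega : ¬ i = 0), if_neg (by omega : ¬ i + 1 = 0),
        if_neg hne]

lemma Aproc_eq (n m : ℕ) (Z : ℕ → ℕ → ℕ) : Aproc n m Z = pres Z m (n - m + 1) := by
  rw [Aproc, iter_aStep]

lemma pcol_pos : ∀ (i : ℕ) (Z : ℕ → ℕ → ℕ) (k r : ℕ), 1 ≤ r → r ≤ i → 1 ≤ pcol Z i k r := by
  intro i
  induction i with
  | zero => intro Z k r h1 h2; omega
  | succ i ih =>
    intro Z k r h1 h2
    by_cases hr : r = i + 1
    · simp only [pcol, if_pos hr]; exact Kval_pos _ _ _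
    · simp only [pcol, if_neg hr]; exact ih _ _ _ h1 (by omega)

lemma pcol_le : ∀ (i : ℕ) (Z : ℕ → ℕ → ℕ) (k r : ℕ), 1 ≤ k → 1 ≤ r → r ≤ i →
    pcol Z i k r ≤ k := by
  intro i
  induction i with
  | zero => intro Z k r _ h1 h2; omega
  | succ i ih =>
    intro Z k r hk h1 h2
    by_cases hr : r = i + 1
    · simp only [pcol, if_pos hr]; exact Kval_le _ _ _ hk
    · simp only [pcol, if_neg hr]
      exact le_trans (ih _ _ _ (Kval_pos _ _ _) h1 (by omega)) (Kval_le _ _ _ hk)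

lemma pcol_mono : ∀ (i : ℕ) (Z : ℕ → ℕ → ℕ) (k r : ℕ), 1 ≤ k → 1 ≤ r → r < i →
    pcol Z i k r ≤ pcol Z i k (r + 1) := by
  intro i
  induction i with
  | zero => intro Z k r _ h1 h2; omega
  | succ i ih =>
    intro Z k r hk h1 h2
    by_cases hr : r + 1 = i + 1
    · have hr' : r ≠ i + 1 := by omega
      simp only [pcol, if_neg hr', if_pos hr]
      exact pcol_le i _ _ _ (Kval_pos _ _ _) h1 (by omega)
    · have hr' : r ≠ i + 1 := by omega
      simp only [pcol, if_neg hr', if_neg hr]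
      exact ih _ _ _ (Kval_pos _ _ _) h1 (by omega)

lemma pcol_chain : ∀ (i : ℕ) (Z : ℕ → ℕ → ℕ) (k r r' : ℕ), 1 ≤ k → 1 ≤ r → r ≤ r' → r' ≤ i →
    pcol Z i k r ≤ pcol Z i k r' := by
  intro i Z k r r' hk h1 h2 h3
  induction r' with
  | zero => omega
  | succ r' ih =>
    rcases Nat.eq_or_lt_of_le h2 with h | h
    · exact le_of_eq (by rw [h])
    · exact le_trans (ih (by omega) (by omega)) (pcol_mono i Z k r' hk (by omega) (by omega))

lemma pres_apply : ∀ (i : ℕ) (Z : ℕ → ℕ → ℕ) (k p q : ℕ),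
    pres Z i k p q = Z p q + if 1 ≤ p ∧ p ≤ i ∧ q = pcol Z i k p then 1 else 0 := by
  intro i
  induction i with
  | zero =>
    intro Z k p q
    simp only [pres]
    rw [if_neg (by omega)]
    omega
  | succ i ih =>
    intro Z k p q
    simp only [pres]
    rw [ih]
    by_cases hp : p = i + 1
    · subst hp
      have e1 : pcol Z (i + 1) k (i + 1) = Kval Z (i + 1) k := by
        simp [pcol]
      rw [e1]
      have h2 : ¬ (1 ≤ i + 1 ∧ i + 1 ≤ i ∧ q = pcol (Raise Z (i + 1) (Kval Z (i + 1) k)) i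
          (Kval Z (i + 1) k) (i + 1)) := by omega
      rw [if_neg h2]
      simp only [Raise, eq_self_iff_true, true_and]
      split_ifs <;> omega
    · have e2 : pcol Z (i + 1) k p = pcol (Raise Z (i + 1) (Kval Z (i + 1) k)) i
          (Kval Z (i + 1) k) p := by
        simp only [pcol, if_neg hp]
      rw [e2]
      have hR : Raise Z (i + 1) (Kval Z (i + 1) k) p q = Z p q := by
        simp only [Raise]; rw [if_neg (by tauto)]
      rw [hR]
      congr 1
      split_ifs <;> omega


/-! ### stage arrays and the Kval-characterisation of `pcol` -/

def stg (Z : ℕ → ℕ → ℕ) (i k r : ℕ) : ℕ → ℕ → ℕ := fun p q =>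
  Z p q + if r + 1 ≤ p ∧ p ≤ i ∧ q = pcol Z i k p then 1 else 0

def pbnd (Z : ℕ → ℕ → ℕ) (i k r : ℕ) : ℕ := if r = i then k else pcol Z i k (r + 1)

lemma stg_self (Z : ℕ → ℕ → ℕ) (i k r q : ℕ) : stg Z i k r r q = Z r q := by
  simp only [stg]
  rw [if_neg (by omega)]
  omega

lemma stg_succ (Z : ℕ → ℕ → ℕ) (i k r q : ℕ) :
    stg Z i k r (r + 1) q = Z (r + 1) q +
      if r + 1 ≤ i ∧ q = pcol Z i k (r + 1) then 1 else 0 := by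
  simp only [stg]
  congr 1
  split_ifs <;> omega

lemma pcol_spec : ∀ (i : ℕ) (Z : ℕ → ℕ → ℕ) (k r : ℕ), 1 ≤ r → r ≤ i →
    pcol Z i k r = Kval (stg Z i k r) r (pbnd Z i k r) := by
  intro i
  induction i with
  | zero => intro Z k r h1 h2; omega
  | succ i ih =>
    intro Z k r h1 h2
    set c := Kval Z (i + 1) k with hc
    by_cases hr : r = i + 1
    · subst hr
      have hstg : stg Z (i + 1) k (i + 1) = Z := by
        funext p q
        simp only [stg]
        rw [if_neg (by omega), Nat.add_zero]
      have hpr : pcol Z (i + 1) k (i + 1) = c := by simp [pcol, hc]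
      rw [hpr, hstg]
      simp [pbnd, hc]
    · have hri : r ≤ i := by omega
      have hpr : pcol Z (i + 1) k r
          = pcol (Raise Z (i + 1) c) i c r := by
        simp only [pcol, if_neg hr]
        rfl
      rw [hpr, ih _ _ _ h1 hri]
      have hstg : stg (Raise Z (i + 1) c) i c r = stg Z (i + 1) k r := by
        funext p q
        simp only [stg, Raise]
        by_cases hp : p = i + 1
        · subst hp
          have h3 : pcol Z (i + 1) k (i + 1) = c := by simp [pcol, hc]
          rw [if_neg (by omega : ¬ (r + 1 ≤ i + 1 ∧ i + 1 ≤ i ∧ q = pcol (Raise Z (i + 1) c) i c (i + 1)))]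
          rw [Nat.add_zero]
          by_cases hq : q = c
          · rw [if_pos ⟨rfl, hq⟩, if_pos ⟨by omega, by omega, by rw [h3]; exact hq⟩]
          · rw [if_neg (by tauto), if_neg (by rw [h3]; tauto)]
            omega
        · rw [if_neg (by tauto)]
          have h4 : pcol Z (i + 1) k p = pcol (Raise Z (i + 1) c) i c p := by
            simp only [pcol, if_neg hp]
            rfl
          rw [← h4]
          congr 1
          split_ifs <;> omega
      have hbnd : pbnd (Raise Z (i + 1) c) i c r = pbnd Z (i + 1) k r := by
        by_cases hri' : r = i
        · subst hri'
          simp only [pbnd, if_pos rfl, if_neg hr]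
          simp [pcol, hc]
        · simp only [pbnd, if_neg hri', if_neg hr]
          simp only [pcol, if_neg (show ¬ r + 1 = i + 1 by omega)]
          rfl
      rw [hstg, hbnd]

lemma pbnd_pos {Z : ℕ → ℕ → ℕ} {i k r : ℕ} (hk : 1 ≤ k) (h1 : 1 ≤ r) (h2 : r ≤ i) :
    1 ≤ pbnd Z i k r := by
  by_cases hr : r = i
  · simp only [pbnd, if_pos hr]; exact hk
  · simp only [pbnd, if_neg hr]; exact pcol_pos i Z k (r + 1) (by omega) (by omega)

lemma pcol_le_pbnd {Z : ℕ → ℕ → ℕ} {i k r : ℕ} (hk : 1 ≤ k) (h1 : 1 ≤ r) (h2 : r ≤ i) :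
    pcol Z i k r ≤ pbnd Z i k r := by
  rw [pcol_spec i Z k r h1 h2]
  exact Kval_le _ _ _ (pbnd_pos hk h1 h2)

lemma pcol_max {Z : ℕ → ℕ → ℕ} {i k r j : ℕ} (h1 : 1 ≤ r) (h2 : r ≤ i)
    (h3 : pcol Z i k r < j) (h4 : j ≤ pbnd Z i k r) :
    ¬ stg Z i k r r j < stg Z i k r (r + 1) (j - 1) := by
  rw [pcol_spec i Z k r h1 h2] at h3
  exact Kval_max h3 h4

lemma pcol_mem {Z : ℕ → ℕ → ℕ} {i k r : ℕ} (h1 : 1 ≤ r) (h2 : r ≤ i)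
    (h3 : 2 ≤ pcol Z i k r) :
    stg Z i k r r (pcol Z i k r) < stg Z i k r (r + 1) (pcol Z i k r - 1) := by
  rw [pcol_spec i Z k r h1 h2] at h3 ⊢
  exact Kval_mem h3

/-! ### delChute commutation -/

lemma Kval_delChute (Z : ℕ → ℕ → ℕ) (i k : ℕ) (hi : 1 ≤ i) :
    Kval (delChute Z) i k = Kval Z (i + 1) k := by
  have hfil : (Finset.Icc 2 k).filter (fun j => delChute Z i j < delChute Z (i + 1) (j - 1))
      = (Finset.Icc 2 k).filter (fun j => Z (i + 1) j < Z (i + 1 + 1) (j - 1)) := by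
    apply Finset.filter_congr
    intro j hj
    have hj2 : 2 ≤ j := (Finset.mem_Icc.1 hj).1
    have e1 : delChute Z i j = Z (i + 1) j := by
      simp only [delChute]; rw [if_pos ⟨hi, by omega⟩]
    have e2 : delChute Z (i + 1) (j - 1) = Z (i + 1 + 1) (j - 1) := by
      simp only [delChute]; rw [if_pos ⟨by omega, by omega⟩]
    rw [e1, e2]
  unfold Kval
  rw [hfil]

lemma delChute_Raise {Z : ℕ → ℕ → ℕ} {i c : ℕ} (hi : 2 ≤ i) (hc : 1 ≤ c) :
    delChute (Raise Z i c) = Raise (delChute Z) (i - 1) c := by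
  funext p q
  simp only [delChute, Raise]
  by_cases hp : 1 ≤ p ∧ 1 ≤ q
  · rw [if_pos hp]
    by_cases h : p + 1 = i ∧ q = c
    · rw [if_pos h, if_pos ⟨by omega, h.2⟩, if_pos hp]
    · rw [if_neg h, if_neg (by omega), if_pos hp]
  · rw [if_neg hp, if_neg (by omega), if_neg hp]

lemma delChute_Raise_one (Z : ℕ → ℕ → ℕ) (c : ℕ) :
    delChute (Raise Z 1 c) = delChute Z := by
  funext p q
  simp only [delChute, Raise]
  by_cases hp : 1 ≤ p ∧ 1 ≤ q
  · rw [if_pos hp, if_pos hp, if_neg (by omega)]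
  · rw [if_neg hp, if_neg hp]

lemma pres_delChute : ∀ (i : ℕ) (Z : ℕ → ℕ → ℕ) (k : ℕ),
    delChute (pres Z (i + 1) k) = pres (delChute Z) i k := by
  intro i
  induction i with
  | zero =>
    intro Z k
    simp only [pres]
    exact delChute_Raise_one _ _
  | succ i ih =>
    intro Z k
    have h1 : pres Z (i + 2) k = pres (Raise Z (i + 2) (Kval Z (i + 2) k)) (i + 1) (Kval Z (i + 2) k) := rfl
    rw [h1, ih, delChute_Raise (by omega) (Kval_pos _ _ _)]
    have h2 : Kval Z (i + 2) k = Kval (delChute Z) (i + 1) k := (Kval_delChute Z (i + 1) k (by omega)).symm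
    simp only [show i + 2 - 1 = i + 1 from rfl]
    rw [h2]
    rfl

lemma pcol_delChute : ∀ (i : ℕ) (Z : ℕ → ℕ → ℕ) (k r : ℕ), 1 ≤ r → r ≤ i →
    pcol (delChute Z) i k r = pcol Z (i + 1) k (r + 1) := by
  intro i
  induction i with
  | zero => intro Z k r h1 h2; omega
  | succ i ih =>
    intro Z k r h1 h2
    by_cases hr : r = i + 1
    · subst hr
      have e1 : pcol (delChute Z) (i + 1) k (i + 1) = Kval (delChute Z) (i + 1) k := by simp [pcol]
      have e2 : pcol Z (i + 2) k (i + 2) = Kval Z (i + 2) k := by simp [pcol]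
      rw [e1, e2, Kval_delChute Z (i + 1) k (by omega)]
    · have hri : r ≤ i := by omega
      set c := Kval Z (i + 2) k with hcdef
      have hc : Kval (delChute Z) (i + 1) k = c := Kval_delChute Z (i + 1) k (by omega)
      have e1 : pcol (delChute Z) (i + 1) k r = pcol (Raise (delChute Z) (i + 1) c) i c r := by
        simp only [pcol, if_neg hr]
        rw [hc]
      have e2 : pcol Z (i + 2) k (r + 1) = pcol (Raise Z (i + 2) c) (i + 1) c (r + 1) := by
        simp only [pcol, if_neg (show ¬ r + 1 = i + 2 by omega)]
        rfl
      have hcpos : 1 ≤ c := by rw [hcdef]; exact Kval_pos _ _ _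
      rw [e1, e2, show Raise (delChute Z) (i + 1) c = delChute (Raise Z (i + 2) c) from
        (delChute_Raise (i := i + 2) (c := c) (by omega) hcpos).symm]
      exact ih _ _ _ h1 hri

lemma delChute_IsTri {s : ℕ} {Z : ℕ → ℕ → ℕ} (hs : 1 ≤ s) (h : IsTri s Z) :
    IsTri (s - 1) (delChute Z) := by
  constructor
  · intro i j hij
    simp only [delChute]
    by_cases hp : 1 ≤ i ∧ 1 ≤ j
    · rw [if_pos hp]
      apply h.1
      intro ⟨a, b, c, d⟩
      exact hij ⟨hp.1, by omega, hp.2, by omega⟩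
    · rw [if_neg hp]
  · intro i j h2 h3 h4 h5
    have e1 : delChute Z (i - 1) (j + 1) = Z i (j + 1) := by
      simp only [delChute]
      rw [if_pos ⟨by omega, by omega⟩]
      congr 1
      omega
    have e2 : delChute Z i j = Z (i + 1) j := by
      simp only [delChute]; rw [if_pos ⟨by omega, by omega⟩]
    rw [e1, e2]
    have := h.2 (i + 1) j (by omega) (by omega) h4 (by omega)
    simpa using this

/-! ### procedure B undoes one raise path -/

lemma BA : ∀ (m : ℕ), ∀ (s : ℕ) (Z : ℕ → ℕ → ℕ) (k : ℕ), 1 ≤ m → m ≤ s → IsTri s Z →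
    1 ≤ k → k ≤ pcol Z m (s - m + 1) 1 →
    (∀ j, k ≤ j → j < pcol Z m (s - m + 1) 1 → Z 1 j = 0) →
    Bproc s (pres Z m (s - m + 1)) k = (Z, m) := by
  intro m
  induction m with
  | zero => intro s Z k h; omega
  | succ m' ih =>
    intro s Z k _ hms hT hk1 hkc hzero
    obtain ⟨s', rfl⟩ : ∃ s', s = s' + 1 := ⟨s - 1, by omega⟩
    set b := s' + 1 - (m' + 1) + 1 with hbdef
    set c1 := pcol Z (m' + 1) b 1 with hc1def
    set W := pres Z (m' + 1) b with hWdef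
    have hb1 : 1 ≤ b := by omega
    have hc1b : c1 ≤ b := by rw [hc1def]; exact pcol_le _ _ _ _ hb1 le_rfl (by omega)
    have hc1pos : 1 ≤ c1 := by rw [hc1def]; exact pcol_pos _ _ _ _ le_rfl (by omega)
    have hc1s : c1 ≤ s' + 1 := by omega
    have hW1 : ∀ q, W 1 q = Z 1 q + if q = c1 then 1 else 0 := by
      intro q
      rw [hWdef, pres_apply]
      congr 1
      split_ifs <;> omega
    have hIdef : Idef (s' + 1) W k = c1 := by
      have hmem : c1 ∈ Iset (s' + 1) W k := by
        simp only [Iset, Set.mem_setOf_eq]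
        refine ⟨hkc, hc1s, ?_⟩
        rw [hW1, if_pos rfl]; omega
      refine le_antisymm (Nat.sInf_le hmem) (le_csInf ⟨c1, hmem⟩ ?_)
      intro j hj
      simp only [Iset, Set.mem_setOf_eq] at hj
      obtain ⟨hj1, hj2, hj3⟩ := hj
      by_contra hlt
      push_neg at hlt
      rw [hW1, if_neg (by omega)] at hj3
      have := hzero j hj1 (by omega)
      omega
    rcases Nat.eq_zero_or_pos m' with hm0 | hm0
    · subst hm0
      have hKv : c1 = Kval Z 1 b := by rw [hc1def]; simp [pcol]
      have hJ : ¬ (Jset (s' + 1) W k).Nonempty := by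
        rintro ⟨j, hj⟩
        simp only [Jset, Set.mem_setOf_eq] at hj
        obtain ⟨hj1, hj2, hj3⟩ := hj
        rw [hIdef] at hj1
        rw [hW1, if_neg (by omega)] at hj3
        have hW2 : W 2 (j - 1) = Z 2 (j - 1) := by
          rw [hWdef, pres_apply, if_neg (by omega), Nat.add_zero]
        rw [hW2] at hj3
        exact Kval_max (by rw [← hKv]; exact hj1) (by omega) hj3
      have hB : Bproc (s' + 1) W k = (Lower W 1 (Idef (s' + 1) W k), 1) := by
        simp only [Bproc]
        rw [if_neg hJ]
      rw [hB, hIdef]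
      have hfin : Lower W 1 c1 = Z := by
        funext p q
        simp only [Lower]
        split_ifs with hpq
        · obtain ⟨hp, hq⟩ := hpq; subst hp; subst hq
          rw [hW1, if_pos rfl]
          omega
        · rw [hWdef, pres_apply, if_neg ?_, Nat.add_zero]
          intro ⟨a1, a2, a3⟩
          have hp1 : p = 1 := by omega
          subst hp1
          exact hpq ⟨rfl, by rw [a3, ← hc1def]⟩
      rw [hfin]
    · -- m' ≥ 1
      set c2 := pcol Z (m' + 1) b 2 with hc2def
      have hc12 : c1 ≤ c2 := by
        rw [hc1def, hc2def]; exact pcol_mono _ _ _ _ hb1 le_rfl (by omega)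
      have hc2b : c2 ≤ b := by
        rw [hc2def]; exact pcol_le _ _ _ _ hb1 (by omega) (by omega)
      have hW2 : ∀ q, W 2 q = Z 2 q + if q = c2 then 1 else 0 := by
        intro q; rw [hWdef, pres_apply]; congr 1; split_ifs <;> omega
      have hJmem : (c2 + 1) ∈ Jset (s' + 1) W k := by
        simp only [Jset, Set.mem_setOf_eq]
        refine ⟨by rw [hIdef]; omega, by omega, ?_⟩
        rw [hW1, if_neg (by omega)]
        rw [show c2 + 1 - 1 = c2 from by omega, hW2, if_pos rfl]
        have htri := hT.2 2 c2 le_rfl (by omega) (by omega) (by omega)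
        simp only [show (2:ℕ) - 1 = 1 from rfl] at htri
        omega
      have hpbnd : pbnd Z (m' + 1) b 1 = c2 := by
        rw [hc2def]; simp only [pbnd, if_neg (show ¬ (1 : ℕ) = m' + 1 by omega)]
      have hJdef : Jdef (s' + 1) W k = c2 + 1 := by
        refine le_antisymm (Nat.sInf_le hJmem) (le_csInf ⟨_, hJmem⟩ ?_)
        intro j hj
        simp only [Jset, Set.mem_setOf_eq, hIdef] at hj
        obtain ⟨hj1, hj2, hj3⟩ := hj
        by_contra hlt
        push_neg at hlt
        rw [hW1, if_neg (by omega), hW2, if_neg (by omega)] at hj3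
        have hmax := pcol_max (Z := Z) (i := m' + 1) (k := b) (r := 1) (j := j)
          le_rfl (by omega) (by omega) (by rw [hpbnd]; omega)
        apply hmax
        rw [stg_self, stg_succ]
        simp only [show (1:ℕ) + 1 = 2 from rfl]
        split_ifs <;> omega
      have hJne : (Jset (s' + 1) W k).Nonempty := ⟨_, hJmem⟩
      have hdel : delChute W = pres (delChute Z) m' b := by
        rw [hWdef]; exact pres_delChute m' Z b
      have hdelc : pcol (delChute Z) m' b 1 = c2 := by
        rw [pcol_delChute m' Z b 1 le_rfl hm0, ← hc2def]
      have hTd : IsTri s' (delChute Z) := by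
        have := delChute_IsTri (s := s' + 1) (by omega) hT
        simpa using this
      have hbb : s' - m' + 1 = b := by omega
      have hrec : Bproc s' (delChute W) c2 = (delChute Z, m') := by
        have h := ih s' (delChute Z) c2 hm0 (by omega) hTd (by omega)
          (by rw [hbb, hdelc]) (by intro j h1 h2; rw [hbb, hdelc] at h2; omega)
        rw [hbb, ← hdel] at h
        exact h
      have hB : Bproc (s' + 1) W k =
          (Lower (adjChute (Bproc s' (delChute W) (Jdef (s' + 1) W k - 1)).1 (W 1)) 1
            (Idef (s' + 1) W k),
           (Bproc s' (delChute W) (Jdef (s' + 1) W k - 1)).2 + 1) := by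
        simp only [Bproc]
        rw [if_pos hJne]
      rw [hB, hIdef, hJdef, show c2 + 1 - 1 = c2 from by omega, hrec]
      have hfin : Lower (adjChute (delChute Z) (W 1)) 1 c1 = Z := by
        funext p q
        simp only [Lower, adjChute, delChute]
        rcases Nat.eq_zero_or_pos p with hp0 | hp0
        · subst hp0
          rw [if_neg (by omega), if_pos rfl]
          exact (hT.1 0 q (by omega)).symm
        · by_cases hp1 : p = 1
          · subst hp1
            rw [if_neg (show ¬ (1:ℕ) = 0 by omega), if_pos rfl]
            by_cases hq : q = c1
            · rw [if_pos ⟨rfl, hq⟩, hW1, if_pos hq]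
              omega
            · rw [if_neg (by tauto), hW1, if_neg hq]
              omega
          · rw [if_neg (by omega : ¬ (p = 1 ∧ q = c1)), if_neg (by omega), if_neg hp1]
            by_cases hq : 1 ≤ q
            · rw [if_pos ⟨by omega, hq⟩, show p - 1 + 1 = p from by omega]
            · rw [if_neg (by omega)]
              exact (hT.1 p q (by omega)).symm
      rw [hfin]

/-! ### monotonicity of consecutive raise paths -/

lemma pcol_anti_core {s m' m r : ℕ} (Z : ℕ → ℕ → ℕ)
    (h1 : 1 ≤ m') (h2 : m' ≤ m) (h3 : m ≤ s) (hr1 : 1 ≤ r) (hrm : r ≤ m')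
    (hnext : r < m' →
      pcol (pres Z m' (s - m' + 1)) m (s - m + 1) (r + 1) ≤ pcol Z m' (s - m' + 1) (r + 1)) :
    pcol (pres Z m' (s - m' + 1)) m (s - m + 1) r ≤ pcol Z m' (s - m' + 1) r := by
  set b' := s - m' + 1 with hb'
  set b := s - m + 1 with hb
  set Z1 := pres Z m' b' with hZ1
  by_contra hcon
  push_neg at hcon
  have hb1 : 1 ≤ b := by omega
  have hb'1 : 1 ≤ b' := by omega
  have hcr1 : 1 ≤ pcol Z m' b' r := pcol_pos _ _ _ _ hr1 hrm
  have hd2 : 2 ≤ pcol Z1 m b r := by omega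
  have hrm2 : r ≤ m := by omega
  have hdb : pcol Z1 m b r ≤ b := pcol_le _ _ _ _ hb1 hr1 hrm2
  have hmem := pcol_mem (Z := Z1) (i := m) (k := b) (r := r) hr1 hrm2 hd2
  rw [stg_self, stg_succ] at hmem
  have hZ1r : ∀ q, Z1 r q = Z r q + if q = pcol Z m' b' r then 1 else 0 := by
    intro q; rw [hZ1, pres_apply]; congr 1; split_ifs <;> omega
  have hZ1r1 : ∀ q, Z1 (r + 1) q = Z (r + 1) q +
      if r + 1 ≤ m' ∧ q = pcol Z m' b' (r + 1) then 1 else 0 := by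
    intro q; rw [hZ1, pres_apply]; congr 1; split_ifs <;> omega
  rw [hZ1r, hZ1r1] at hmem
  by_cases hA : r < m'
  · have f4 := hnext hA
    have hrltm : r < m := by omega
    have hpbnd1 : pbnd Z1 m b r = pcol Z1 m b (r + 1) := by
      simp only [pbnd, if_neg (show ¬ r = m by omega)]
    have f3 : pcol Z1 m b r ≤ pcol Z1 m b (r + 1) := by
      rw [← hpbnd1]; exact pcol_le_pbnd hb1 hr1 hrm2
    have hpbnd2 : pbnd Z m' b' r = pcol Z m' b' (r + 1) := by
      simp only [pbnd, if_neg (show ¬ r = m' by omega)]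
    have hmax := pcol_max (Z := Z) (i := m') (k := b') (r := r)
      (j := pcol Z1 m b r) hr1 hrm hcon (by rw [hpbnd2]; omega)
    rw [stg_self, stg_succ] at hmax
    split_ifs at hmem hmax <;> omega
  · have hA' : r = m' := by omega
    by_cases hB : r < m
    · have hpbnd1 : pbnd Z1 m b r = pcol Z1 m b (r + 1) := by
        simp only [pbnd, if_neg (show ¬ r = m by omega)]
      have f3 : pcol Z1 m b r ≤ pcol Z1 m b (r + 1) := by
        rw [← hpbnd1]; exact pcol_le_pbnd hb1 hr1 hrm2
      have hpbnd2 : pbnd Z m' b' r = b' := by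
        simp only [pbnd, if_pos hA']
      have hmax := pcol_max (Z := Z) (i := m') (k := b') (r := r)
        (j := pcol Z1 m b r) hr1 hrm hcon (by rw [hpbnd2]; omega)
      rw [stg_self, stg_succ] at hmax
      split_ifs at hmem hmax <;> omega
    · have hB' : r = m := by omega
      have hpbnd2 : pbnd Z m' b' r = b' := by
        simp only [pbnd, if_pos hA']
      have hmax := pcol_max (Z := Z) (i := m') (k := b') (r := r)
        (j := pcol Z1 m b r) hr1 hrm hcon (by rw [hpbnd2]; omega)
      rw [stg_self, stg_succ] at hmax
      split_ifs at hmem hmax <;> omega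

lemma pcol_anti : ∀ (t s m' m r : ℕ) (Z : ℕ → ℕ → ℕ),
    1 ≤ m' → m' ≤ m → m ≤ s → 1 ≤ r → r ≤ m' → m' - r = t →
    pcol (pres Z m' (s - m' + 1)) m (s - m + 1) r ≤ pcol Z m' (s - m' + 1) r := by
  intro t
  induction t with
  | zero =>
    intro s m' m r Z h1 h2 h3 hr1 hrm ht
    exact pcol_anti_core Z h1 h2 h3 hr1 hrm (fun hh => absurd hh (by omega))
  | succ t iht =>
    intro s m' m r Z h1 h2 h3 hr1 hrm ht
    exact pcol_anti_core Z h1 h2 h3 hr1 hrm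
      (fun _ => iht s m' m (r + 1) Z h1 h2 h3 (by omega) (by omega) (by omega))

/-! ### triangularity and dimension bookkeeping -/

lemma Raise_IsTri {s : ℕ} {Z : ℕ → ℕ → ℕ} {i c : ℕ} (hT : IsTri s Z)
    (hi1 : 1 ≤ i) (his : i ≤ s) (hc1 : 1 ≤ c) (hcs : c ≤ s - i + 1)
    (hstrict : 2 ≤ c → Z i c < Z (i + 1) (c - 1)) :
    IsTri s (Raise Z i c) := by
  constructor
  · intro p q hpq
    simp only [Raise]
    by_cases h : p = i ∧ q = c
    · obtain ⟨hp, hq⟩ := h; subst hp; subst hq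
      exact absurd ⟨hi1, his, hc1, hcs⟩ hpq
    · rw [if_neg h]; exact hT.1 p q hpq
  · intro p q h2 h3 h4 h5
    simp only [Raise]
    by_cases ha : p - 1 = i ∧ q + 1 = c
    · obtain ⟨ha1, ha2⟩ := ha
      have e1 : Z (p - 1) (q + 1) = Z i c := by rw [ha1, ha2]
      rw [if_pos ⟨ha1, ha2⟩, if_neg (by omega : ¬ (p = i ∧ q = c)), e1]
      have e2 : Z p q = Z (i + 1) (c - 1) := by
        rw [show p = i + 1 from by omega, show q = c - 1 from by omega]
      rw [e2]
      exact hstrict (by omega)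
    · by_cases hb : p = i ∧ q = c
      · rw [if_neg ha, if_pos hb]
        have := hT.2 p q h2 h3 h4 h5
        omega
      · rw [if_neg ha, if_neg hb]
        exact hT.2 p q h2 h3 h4 h5

lemma pres_IsTri : ∀ (i : ℕ) (Z : ℕ → ℕ → ℕ) (k s : ℕ), IsTri s Z → 1 ≤ k →
    k ≤ s - i + 1 → i ≤ s → IsTri s (pres Z i k) := by
  intro i
  induction i with
  | zero => intro Z k s hT _ _ _; exact hT
  | succ i ih =>
    intro Z k s hT hk1 hks his
    show IsTri s (pres (Raise Z (i + 1) (Kval Z (i + 1) k)) i (Kval Z (i + 1) k))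
    have hKle := Kval_le Z (i + 1) k hk1
    apply ih
    · exact Raise_IsTri hT (by omega) his (Kval_pos _ _ _) (by omega)
        (fun h2 => Kval_mem h2)
    · exact Kval_pos _ _ _
    · omega
    · omega

lemma pres_udim (s : ℕ) (Z : ℕ → ℕ → ℕ) (i k : ℕ) (hk1 : 1 ≤ k) (hks : k ≤ s - i + 1)
    (his : i ≤ s) (p : ℕ) :
    udim s (pres Z i k) p = udim s Z p + if 1 ≤ p ∧ p ≤ i then 1 else 0 := by
  unfold udim
  have hcong : ∀ j ∈ Finset.Icc 1 (s - p + 1), pres Z i k p j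
      = Z p j + if (1 ≤ p ∧ p ≤ i) ∧ j = pcol Z i k p then 1 else 0 := by
    intro j _
    rw [pres_apply]
    congr 1
    split_ifs <;> tauto
  rw [Finset.sum_congr rfl hcong, Finset.sum_add_distrib]
  congr 1
  by_cases hpi : 1 ≤ p ∧ p ≤ i
  · rw [if_pos hpi]
    have hmem : pcol Z i k p ∈ Finset.Icc 1 (s - p + 1) := by
      rw [Finset.mem_Icc]
      refine ⟨pcol_pos _ _ _ _ hpi.1 hpi.2, ?_⟩
      have := pcol_le i Z k p hk1 hpi.1 hpi.2
      omega
    have hcong2 : ∀ j ∈ Finset.Icc 1 (s - p + 1),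
        (if (1 ≤ p ∧ p ≤ i) ∧ j = pcol Z i k p then (1:ℕ) else 0)
        = if j = pcol Z i k p then (1:ℕ) else 0 := by
      intro j _
      split_ifs <;> tauto
    rw [Finset.sum_congr rfl hcong2, Finset.sum_ite_eq' (Finset.Icc 1 (s - p + 1))
      (pcol Z i k p) (fun _ => (1:ℕ)), if_pos hmem]
  · rw [if_neg hpi]
    apply Finset.sum_eq_zero
    intro j _
    rw [if_neg (fun u => hpi u.1)]

lemma adjChute_IsTri {N : ℕ} {X : ℕ → ℕ → ℕ} (hN : 2 ≤ N) (hX : IsTri (N - 1) X) :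
    IsTri N (adjChute X (fun _ => 0)) := by
  constructor
  · intro i j hij
    simp only [adjChute]
    split_ifs with h0 h1
    · rfl
    · rfl
    · apply hX.1
      intro ⟨a1, a2, a3, a4⟩
      exact hij ⟨by omega, by omega, a3, by omega⟩
  · intro i j h2 h3 h4 h5
    have hR : adjChute X (fun _ => 0) i j = X (i - 1) j := by
      simp only [adjChute]; rw [if_neg (by omega), if_neg (by omega)]
    rw [hR]
    by_cases hi2 : i = 2
    · have hL : adjChute X (fun _ => 0) (i - 1) (j + 1) = 0 := by
        simp only [adjChute]; rw [if_neg (by omega), if_pos (by omega)]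
      rw [hL]; omega
    · have hL : adjChute X (fun _ => 0) (i - 1) (j + 1) = X (i - 1 - 1) (j + 1) := by
        simp only [adjChute]; rw [if_neg (by omega), if_neg (by omega)]
      rw [hL]
      exact hX.2 (i - 1) j (by omega) (by omega) h4 (by omega)

lemma adjChute_udim_one (N : ℕ) (X : ℕ → ℕ → ℕ) :
    udim N (adjChute X (fun _ => 0)) 1 = 0 := by
  unfold udim
  apply Finset.sum_eq_zero
  intro j _
  simp [adjChute]

lemma adjChute_udim (N : ℕ) (X : ℕ → ℕ → ℕ) (p : ℕ) (hp2 : 2 ≤ p) (hpN : p ≤ N) :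
    udim N (adjChute X (fun _ => 0)) p = udim (N - 1) X (p - 1) := by
  unfold udim
  rw [show (N - 1) - (p - 1) + 1 = N - p + 1 from by omega]
  apply Finset.sum_congr rfl
  intro j _
  simp only [adjChute]
  rw [if_neg (by omega), if_neg (by omega)]

lemma delLadder_IsTri {N : ℕ} {y : ℕ → ℕ → ℕ} (hN : 2 ≤ N) (hT : IsTri N y) :
    IsTri (N - 1) (delLadder N y) := by
  constructor
  · intro i j hij
    simp only [delLadder]
    split_ifs with h
    · obtain ⟨a1, a2, a3⟩ := h
      apply hT.1
      intro ⟨b1, b2, b3, b4⟩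
      exact hij ⟨a1, by omega, a2, by omega⟩
    · rfl
  · intro i j h2 h3 h4 h5
    simp only [delLadder]
    rw [if_pos ⟨by omega, by omega, by omega⟩, if_pos ⟨by omega, by omega, by omega⟩]
    exact hT.2 i j h2 (by omega) h4 (by omega)

lemma delLadder_udim {N : ℕ} (y : ℕ → ℕ → ℕ) (hN : 2 ≤ N) (i : ℕ) (h1 : 1 ≤ i)
    (h2 : i ≤ N - 1) :
    udim (N - 1) (delLadder N y) i + y i (N - i + 1) = udim N y i := by
  unfold udim
  rw [show (N - 1) - i + 1 = N - i from by omega]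
  rw [show N - i + 1 = (N - i) + 1 from rfl]
  rw [Finset.sum_Icc_succ_top (by omega : 1 ≤ N - i + 1)]
  have hcong : ∀ j ∈ Finset.Icc 1 (N - i), delLadder N y i j = y i j := by
    intro j hj
    rw [Finset.mem_Icc] at hj
    simp only [delLadder]
    rw [if_pos ⟨h1, by omega, by omega⟩]
  rw [Finset.sum_congr rfl hcong]

lemma udim_rowN (N : ℕ) (hN : 1 ≤ N) (y : ℕ → ℕ → ℕ) : udim N y N = y N 1 := by
  unfold udim
  rw [show N - N + 1 = 1 from by omega]
  simp

/-! ### last-ladder exponents, `mstar`, and the decrement operation -/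

def Eexp (N : ℕ) (y : ℕ → ℕ → ℕ) (r : ℕ) : ℕ := y (N - (r - 1)) r - y (N - r) (r + 1)

lemma applyAs_succ (N : ℕ) (y : ℕ → ℕ → ℕ) (m : ℕ) (z : ℕ → ℕ → ℕ) :
    applyAs N y (m + 1) z = (Aproc N (m + 1))^[Eexp N y (m + 1)] (applyAs N y m z) := by
  simp only [applyAs, Eexp, Nat.add_sub_cancel, Nat.sub_sub]

lemma ladder_chain {N : ℕ} {y : ℕ → ℕ → ℕ} (hT : IsTri N y) :
    ∀ (b a : ℕ), 1 ≤ a → a ≤ b → y (N + 1 - b) b ≤ y (N + 1 - a) a := by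
  intro b
  induction b with
  | zero => intro a h1 h2; omega
  | succ b ih =>
    intro a h1 h2
    rcases Nat.eq_or_lt_of_le h2 with h | h
    · rw [h]
    · have step : y (N + 1 - (b + 1)) (b + 1) ≤ y (N + 1 - b) b := by
        by_cases hbN : b + 1 ≤ N
        · have hx := hT.2 (N + 1 - b) b (by omega) (by omega) (by omega) (by omega)
          rw [show N + 1 - b - 1 = N + 1 - (b + 1) from by omega] at hx
          exact hx
        · have h0 : y (N + 1 - (b + 1)) (b + 1) = 0 := by
            apply hT.1
            intro ⟨a1, a2, a3, a4⟩
            omega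
          omega
      exact le_trans step (ih a h1 (by omega))

lemma ladder_eq_zero {N : ℕ} {y : ℕ → ℕ → ℕ} (hT : IsTri N y) (h0 : y N 1 = 0)
    (r : ℕ) (hr : 1 ≤ r) : y (N + 1 - r) r = 0 := by
  have := ladder_chain hT r 1 le_rfl hr
  rw [show N + 1 - 1 = N from by omega] at this
  omega

lemma Eexp_zero_of_N1 {N : ℕ} {y : ℕ → ℕ → ℕ} (hT : IsTri N y) (h0 : y N 1 = 0)
    (r : ℕ) (hr : 1 ≤ r) : Eexp N y r = 0 := by
  have h := ladder_eq_zero hT h0 r hr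
  unfold Eexp
  rw [show N - (r - 1) = N + 1 - r from by omega, h]
  omega

def mstar (N : ℕ) (y : ℕ → ℕ → ℕ) : ℕ :=
  ((Finset.Icc 1 N).filter (fun r => 0 < Eexp N y r)).sup id

lemma mstar_spec {N : ℕ} {y : ℕ → ℕ → ℕ} (hT : IsTri N y) (h1 : 0 < y N 1) :
    1 ≤ mstar N y ∧ mstar N y ≤ N ∧ 0 < Eexp N y (mstar N y) := by
  have hne : ((Finset.Icc 1 N).filter (fun r => 0 < Eexp N y r)).Nonempty := by
    by_contra hne
    rw [Finset.not_nonempty_iff_eq_empty] at hne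
    have hz : ∀ r, 1 ≤ r → r ≤ N → Eexp N y r = 0 := by
      intro r ha hb
      by_contra hc
      have hmem : r ∈ (Finset.Icc 1 N).filter (fun r => 0 < Eexp N y r) := by
        rw [Finset.mem_filter, Finset.mem_Icc]; exact ⟨⟨ha, hb⟩, by omega⟩
      rw [hne] at hmem
      simp at hmem
    have hchain : ∀ r, r ≤ N → y N 1 ≤ y (N - r) (r + 1) := by
      intro r
      induction r with
      | zero => intro _; rw [Nat.sub_zero]
      | succ r ihr =>
        intro hrN
        have h4 := ihr (by omega)
        have h5 := hz (r + 1) (by omega) hrN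
        unfold Eexp at h5
        rw [show N - (r + 1 - 1) = N - r from by omega] at h5
        omega
    have hlast := hchain N le_rfl
    have hz0 : y (N - N) (N + 1) = 0 := by
      apply hT.1; intro ⟨a1, a2, a3, a4⟩; omega
    omega
  obtain ⟨b, hb, hbe⟩ := Finset.exists_mem_eq_sup _ hne id
  rw [Finset.mem_filter, Finset.mem_Icc] at hb
  have hms : mstar N y = b := hbe
  rw [hms]
  exact ⟨hb.1.1, hb.1.2, hb.2⟩

lemma mstar_max {N : ℕ} {y : ℕ → ℕ → ℕ} (hT : IsTri N y) (r : ℕ)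
    (hr : mstar N y < r) (hr1 : 1 ≤ r) : Eexp N y r = 0 := by
  by_cases hrN : r ≤ N
  · by_contra hc
    have hmem : r ∈ (Finset.Icc 1 N).filter (fun r => 0 < Eexp N y r) := by
      rw [Finset.mem_filter, Finset.mem_Icc]; exact ⟨⟨hr1, hrN⟩, by omega⟩
    have hle : r ≤ mstar N y := Finset.le_sup (f := id) hmem
    omega
  · have h0 : y (N - (r - 1)) r = 0 := by
      apply hT.1; intro ⟨a1, a2, a3, a4⟩; omega
    unfold Eexp
    rw [h0]
    omega

lemma ladder_pos {N : ℕ} {y : ℕ → ℕ → ℕ} (hT : IsTri N y) (h1 : 0 < y N 1) (r : ℕ)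
    (hr1 : 1 ≤ r) (hr2 : r ≤ mstar N y) : 1 ≤ y (N + 1 - r) r := by
  obtain ⟨hm1, hmN, hmE⟩ := mstar_spec hT h1
  have hch := ladder_chain hT (mstar N y) r hr1 hr2
  have hsub : Eexp N y (mstar N y) ≤ y (N - (mstar N y - 1)) (mstar N y) := Nat.sub_le _ _
  rw [show N - (mstar N y - 1) = N + 1 - mstar N y from by omega] at hsub
  omega

def dec (N : ℕ) (y : ℕ → ℕ → ℕ) : ℕ → ℕ → ℕ := fun i j =>
  if i + j = N + 1 ∧ j ≤ mstar N y then y i j - 1 else y i j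

lemma dec_offladder {N : ℕ} (y : ℕ → ℕ → ℕ) (i j : ℕ) (h : i + j ≠ N + 1) :
    dec N y i j = y i j := by
  simp only [dec]; rw [if_neg (fun u => h u.1)]

lemma dec_N1 {N : ℕ} {y : ℕ → ℕ → ℕ} (hT : IsTri N y) (h1 : 0 < y N 1) :
    dec N y N 1 = y N 1 - 1 := by
  obtain ⟨hm1, _, _⟩ := mstar_spec hT h1
  show (if N + 1 = N + 1 ∧ 1 ≤ mstar N y then y N 1 - 1 else y N 1) = y N 1 - 1
  rw [if_pos ⟨rfl, hm1⟩]

lemma Eexp_dec_lt {N : ℕ} {y : ℕ → ℕ → ℕ} (hT : IsTri N y) (h1 : 0 < y N 1) (r : ℕ)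
    (hr1 : 1 ≤ r) (hr : r < mstar N y) : Eexp N (dec N y) r = Eexp N y r := by
  obtain ⟨hm1, hmN, hmE⟩ := mstar_spec hT h1
  unfold Eexp
  have e1 : dec N y (N - (r - 1)) r = y (N - (r - 1)) r - 1 := by
    simp only [dec]; rw [if_pos ⟨by omega, by omega⟩]
  have e2 : dec N y (N - r) (r + 1) = y (N - r) (r + 1) - 1 := by
    simp only [dec]; rw [if_pos ⟨by omega, by omega⟩]
  have hpos : 1 ≤ y (N - r) (r + 1) := by
    have hlp := ladder_pos hT h1 (r + 1) (by omega) (by omega)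
    rw [show N + 1 - (r + 1) = N - r from by omega] at hlp
    exact hlp
  rw [e1, e2]
  omega

lemma Eexp_dec_eq {N : ℕ} {y : ℕ → ℕ → ℕ} (hT : IsTri N y) (h1 : 0 < y N 1) :
    Eexp N (dec N y) (mstar N y) = Eexp N y (mstar N y) - 1 := by
  obtain ⟨hm1, hmN, hmE⟩ := mstar_spec hT h1
  unfold Eexp
  have e1 : dec N y (N - (mstar N y - 1)) (mstar N y)
      = y (N - (mstar N y - 1)) (mstar N y) - 1 := by
    simp only [dec]; rw [if_pos ⟨by omega, le_rfl⟩]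
  have e2 : dec N y (N - mstar N y) (mstar N y + 1) = y (N - mstar N y) (mstar N y + 1) := by
    simp only [dec]; rw [if_neg (by omega)]
  rw [e1, e2]
  unfold Eexp at hmE
  omega

lemma Eexp_dec_gt {N : ℕ} {y : ℕ → ℕ → ℕ} (r : ℕ) (hr : mstar N y < r) :
    Eexp N (dec N y) r = Eexp N y r := by
  unfold Eexp
  have e1 : dec N y (N - (r - 1)) r = y (N - (r - 1)) r := by
    simp only [dec]; rw [if_neg (by omega)]
  have e2 : dec N y (N - r) (r + 1) = y (N - r) (r + 1) := by
    simp only [dec]; rw [if_neg (by omega)]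
  rw [e1, e2]

lemma mstar_dec_le {N : ℕ} {y : ℕ → ℕ → ℕ} (hT : IsTri N y) (h1 : 0 < y N 1) :
    mstar N (dec N y) ≤ mstar N y := by
  have hms : mstar N (dec N y)
      = ((Finset.Icc 1 N).filter (fun r => 0 < Eexp N (dec N y) r)).sup id := rfl
  rw [hms]
  apply Finset.sup_le
  intro r hr
  rw [Finset.mem_filter, Finset.mem_Icc] at hr
  show r ≤ mstar N y
  by_contra hc
  push_neg at hc
  have he := Eexp_dec_gt (N := N) (y := y) r (by omega)
  have h0 := mstar_max hT r (by omega) (by omega)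
  omega

lemma dec_tri {N : ℕ} {y : ℕ → ℕ → ℕ} (hT : IsTri N y) (h1 : 0 < y N 1) :
    IsTri N (dec N y) := by
  obtain ⟨hm1, hmN, hmE⟩ := mstar_spec hT h1
  constructor
  · intro i j hij
    have h0 := hT.1 i j hij
    simp only [dec]
    split_ifs <;> omega
  · intro i j h2 h3 h4 h5
    have htri := hT.2 i j h2 h3 h4 h5
    simp only [dec]
    by_cases hd : i + j = N + 1
    · have hd2 : (i - 1) + (j + 1) = N + 1 := by omega
      by_cases hj1 : j + 1 ≤ mstar N y
      · rw [if_pos ⟨hd2, hj1⟩, if_pos ⟨hd, by omega⟩]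
        omega
      · by_cases hj2 : j ≤ mstar N y
        · have hjm : j = mstar N y := by omega
          rw [if_neg (by omega), if_pos ⟨hd, hj2⟩]
          have hE := hmE
          unfold Eexp at hE
          have e1 : N - (mstar N y - 1) = i := by omega
          have e2 : N - mstar N y = i - 1 := by omega
          rw [e1, e2, ← hjm] at hE
          omega
        · rw [if_neg (by omega), if_neg (by omega)]
          exact htri
    · have hd2 : (i - 1) + (j + 1) ≠ N + 1 := by omega
      rw [if_neg (fun u => hd2 u.1), if_neg (fun u => hd u.1)]
      exact htri

lemma dec_udim {N : ℕ} {y : ℕ → ℕ → ℕ} (hT : IsTri N y) (h1 : 0 < y N 1) (i : ℕ)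
    (hi1 : 1 ≤ i) (hiN : i ≤ N) :
    udim N (dec N y) i + (if N + 1 - mstar N y ≤ i then 1 else 0) = udim N y i := by
  obtain ⟨hm1, hmN, hmE⟩ := mstar_spec hT h1
  unfold udim
  by_cases hcase : N + 1 - mstar N y ≤ i
  · rw [if_pos hcase]
    have hmem : N - i + 1 ∈ Finset.Icc 1 (N - i + 1) := by
      rw [Finset.mem_Icc]; omega
    have hc : ∀ j ∈ (Finset.Icc 1 (N - i + 1)).erase (N - i + 1),
        dec N y i j = y i j := by
      intro j hj
      rw [Finset.mem_erase, Finset.mem_Icc] at hj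
      apply dec_offladder
      omega
    have hdj0 : dec N y i (N - i + 1) = y i (N - i + 1) - 1 := by
      simp only [dec]; rw [if_pos ⟨by omega, by omega⟩]
    have hpos : 1 ≤ y i (N - i + 1) := by
      have hlp := ladder_pos hT h1 (N - i + 1) (by omega) (by omega)
      rw [show N + 1 - (N - i + 1) = i from by omega] at hlp
      exact hlp
    have key : ∀ (f g : ℕ → ℕ),
        (∀ j ∈ (Finset.Icc 1 (N - i + 1)).erase (N - i + 1), f j = g j) →
        f (N - i + 1) + 1 = g (N - i + 1) →
        Finset.sum (Finset.Icc 1 (N - i + 1)) f + 1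
          = Finset.sum (Finset.Icc 1 (N - i + 1)) g := by
      intro f g hfg hpiv
      have e1 : Finset.sum (Finset.Icc 1 (N - i + 1)) f
          = Finset.sum ((Finset.Icc 1 (N - i + 1)).erase (N - i + 1)) f + f (N - i + 1) :=
        (Finset.sum_erase_add _ _ hmem).symm
      have e2 : Finset.sum (Finset.Icc 1 (N - i + 1)) g
          = Finset.sum ((Finset.Icc 1 (N - i + 1)).erase (N - i + 1)) g + g (N - i + 1) :=
        (Finset.sum_erase_add _ _ hmem).symm
      have e3 : Finset.sum ((Finset.Icc 1 (N - i + 1)).erase (N - i + 1)) f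
          = Finset.sum ((Finset.Icc 1 (N - i + 1)).erase (N - i + 1)) g :=
        Finset.sum_congr rfl hfg
      omega
    exact key (fun j => dec N y i j) (fun j => y i j) hc
      (by show dec N y i (N - i + 1) + 1 = y i (N - i + 1); rw [hdj0]; omega)
  · rw [if_neg hcase, Nat.add_zero]
    apply Finset.sum_congr rfl
    intro j hj
    rw [Finset.mem_Icc] at hj
    simp only [dec]
    rw [if_neg ?_]
    intro ⟨u1, u2⟩
    omega

lemma Tmap_succ (n : ℕ) (y : ℕ → ℕ → ℕ) :
    Tmap (n + 2) y = applyAs (n + 2) y (n + 2)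
      (adjChute (Tmap (n + 1) (delLadder (n + 2) y)) (fun _ => 0)) := rfl

lemma applyAs_congr (N : ℕ) (y y' z : ℕ → ℕ → ℕ) : ∀ (M : ℕ),
    (∀ r, 1 ≤ r → r ≤ M → Eexp N y r = Eexp N y' r) →
    applyAs N y M z = applyAs N y' M z := by
  intro M
  induction M with
  | zero => intro _; rfl
  | succ M ih =>
    intro h
    rw [applyAs_succ, applyAs_succ, h (M + 1) (by omega) le_rfl,
      ih (fun r h1 h2 => h r h1 (by omega))]

lemma applyAs_drop (N : ℕ) (y z : ℕ → ℕ → ℕ) : ∀ (M M' : ℕ), M' ≤ M →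
    (∀ r, M' < r → r ≤ M → Eexp N y r = 0) → applyAs N y M z = applyAs N y M' z := by
  intro M
  induction M with
  | zero =>
    intro M' hM _
    have : M' = 0 := by omega
    rw [this]
  | succ M ih =>
    intro M' hM h
    rcases Nat.eq_or_lt_of_le hM with he | hlt
    · rw [he]
    · rw [applyAs_succ, h (M + 1) (by omega) le_rfl]
      simp only [Function.iterate_zero, id_eq]
      exact ih M' (by omega) (fun r h1 h2 => h r h1 (by omega))

lemma Tmap_base (n : ℕ) (y : ℕ → ℕ → ℕ) (hT : IsTri (n + 2) y) (h0 : y (n + 2) 1 = 0) :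
    Tmap (n + 2) y = adjChute (Tmap (n + 1) (delLadder (n + 2) y)) (fun _ => 0) := by
  rw [Tmap_succ]
  rw [applyAs_drop (n + 2) y _ (n + 2) 0 (by omega)
    (fun r h1 _ => Eexp_zero_of_N1 hT h0 r (by omega))]
  rfl

lemma delLadder_dec {N : ℕ} (y : ℕ → ℕ → ℕ) :
    delLadder N (dec N y) = delLadder N y := by
  funext i j
  simp only [delLadder]
  split_ifs with h
  · exact dec_offladder y i j (by omega)
  · rfl

lemma Tmap_dec (n : ℕ) (y : ℕ → ℕ → ℕ) (hT : IsTri (n + 2) y) (h1 : 0 < y (n + 2) 1) :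
    Tmap (n + 2) y
      = pres (Tmap (n + 2) (dec (n + 2) y)) (mstar (n + 2) y)
          ((n + 2) - mstar (n + 2) y + 1) := by
  obtain ⟨hm1, hmN, hmE⟩ := mstar_spec hT h1
  have hy1 : Tmap (n + 2) y = applyAs (n + 2) y (mstar (n + 2) y)
      (adjChute (Tmap (n + 1) (delLadder (n + 2) y)) (fun _ => 0)) := by
    rw [Tmap_succ]
    exact applyAs_drop _ _ _ _ _ hmN (fun r hr _ => mstar_max hT r hr (by omega))
  have hy2 : Tmap (n + 2) (dec (n + 2) y) = applyAs (n + 2) (dec (n + 2) y) (mstar (n + 2) y)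
      (adjChute (Tmap (n + 1) (delLadder (n + 2) y)) (fun _ => 0)) := by
    rw [Tmap_succ, delLadder_dec]
    exact applyAs_drop _ _ _ _ _ hmN
      (fun r hr _ => by rw [Eexp_dec_gt r hr]; exact mstar_max hT r hr (by omega))
  obtain ⟨M', hM'⟩ : ∃ M', mstar (n + 2) y = M' + 1 := ⟨mstar (n + 2) y - 1, by omega⟩
  have hEdec := Eexp_dec_eq hT h1
  rw [hy1, hy2]
  rw [hM', applyAs_succ, applyAs_succ]
  rw [applyAs_congr (n + 2) (dec (n + 2) y) y _ M'
    (fun r ha hb => Eexp_dec_lt hT h1 r ha (by omega))]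
  rw [show Eexp (n + 2) y (M' + 1) = Eexp (n + 2) (dec (n + 2) y) (M' + 1) + 1 from by
    rw [← hM'] at *; omega]
  rw [Function.iterate_succ_apply', Aproc_eq]

/-! ### the main inner induction -/

lemma inner (n : ℕ)
    (IH : ∀ y', IsTri (n + 1) y' →
      (IsTri (n + 1) (Tmap (n + 1) y') ∧
        ∀ p, 1 ≤ p → p ≤ n + 1 →
          udim (n + 1) (Tmap (n + 1) y') p = udim (n + 1) y' (n + 1 + 1 - p))) :
    ∀ (t : ℕ) (y : ℕ → ℕ → ℕ), IsTri (n + 2) y → y (n + 2) 1 = t →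
      ((IsTri (n + 2) (Tmap (n + 2) y) ∧
        ∀ p, 1 ≤ p → p ≤ n + 2 →
          udim (n + 2) (Tmap (n + 2) y) p = udim (n + 2) y (n + 2 + 1 - p)) ∧
      (0 < t → Bproc (n + 2) (Tmap (n + 2) y) 1
          = (Tmap (n + 2) (dec (n + 2) y), mstar (n + 2) y)) ∧
      (∀ j, Tmap (n + 2) y 1 j ≠ 0 →
        0 < t ∧ pcol (Tmap (n + 2) (dec (n + 2) y)) (mstar (n + 2) y)
          (n + 2 - mstar (n + 2) y + 1) 1 ≤ j)) := by
  intro t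
  induction t with
  | zero =>
    intro y hT hy0
    have hbase := Tmap_base n y hT hy0
    have hdT : IsTri (n + 1) (delLadder (n + 2) y) :=
      delLadder_IsTri (N := n + 2) (by omega) hT
    obtain ⟨hXT, hXu⟩ := IH _ hdT
    refine ⟨⟨?_, ?_⟩, by omega, ?_⟩
    · rw [hbase]
      exact adjChute_IsTri (N := n + 2) (by omega) hXT
    · intro p hp1 hp2
      rw [hbase]
      by_cases hp : p = 1
      · subst hp
        rw [adjChute_udim_one]
        rw [show n + 2 + 1 - 1 = n + 2 from by omega, udim_rowN (n + 2) (by omega), hy0]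
      · rw [adjChute_udim (n + 2) _ p (by omega) hp2,
          show n + 2 - 1 = n + 1 from by omega]
        have hXu' : udim (n + 1) (Tmap (n + 1) (delLadder (n + 2) y)) (p - 1)
            = udim (n + 1) (delLadder (n + 2) y) (n + 3 - p) := by
          have := hXu (p - 1) (by omega) (by omega)
          rw [show n + 1 + 1 - (p - 1) = n + 3 - p from by omega] at this
          exact this
        have hdu : udim (n + 1) (delLadder (n + 2) y) (n + 3 - p)
            + y (n + 3 - p) p = udim (n + 2) y (n + 3 - p) := by
          have := delLadder_udim (N := n + 2) y (by omega) (n + 3 - p) (by omega) (by omega)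
          rw [show n + 2 - (n + 3 - p) + 1 = p from by omega] at this
          exact this
        have hlad : y (n + 3 - p) p = 0 := by
          have := ladder_eq_zero hT hy0 p (by omega)
          rw [show n + 2 + 1 - p = n + 3 - p from by omega] at this
          exact this
        rw [show n + 2 + 1 - p = n + 3 - p from by omega]
        omega
    · intro j hne
      exfalso
      apply hne
      rw [hbase]
      simp [adjChute]
  | succ t iht =>
    intro y hT hyt
    have hy1 : 0 < y (n + 2) 1 := by omega
    obtain ⟨hm1, hmN, hmE⟩ := mstar_spec hT hy1
    have hdtri : IsTri (n + 2) (dec (n + 2) y) := dec_tri hT hy1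
    have hdN1 : dec (n + 2) y (n + 2) 1 = t := by rw [dec_N1 hT hy1]; omega
    obtain ⟨⟨hZT, hZu⟩, hZB, hZc⟩ := iht (dec (n + 2) y) hdtri hdN1
    have hdecomp := Tmap_dec n y hT hy1
    set M := mstar (n + 2) y with hM
    set Z := Tmap (n + 2) (dec (n + 2) y) with hZdef
    have hanti' : 0 < t → pcol Z M (n + 2 - M + 1) 1
        ≤ pcol (Tmap (n + 2) (dec (n + 2) (dec (n + 2) y)))
            (mstar (n + 2) (dec (n + 2) y))
            (n + 2 - mstar (n + 2) (dec (n + 2) y) + 1) 1 := by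
      intro ht0
      have hm'1 : 1 ≤ mstar (n + 2) (dec (n + 2) y) :=
        (mstar_spec hdtri (by omega)).1
      have h := pcol_anti (mstar (n + 2) (dec (n + 2) y) - 1) (n + 2)
        (mstar (n + 2) (dec (n + 2) y)) M 1
        (Tmap (n + 2) (dec (n + 2) (dec (n + 2) y)))
        hm'1 (mstar_dec_le hT hy1) (by omega) le_rfl hm'1 (by omega)
      rw [← Tmap_dec n (dec (n + 2) y) hdtri (by omega)] at h
      exact h
    have hzero : ∀ j, 1 ≤ j → j < pcol Z M (n + 2 - M + 1) 1 → Z 1 j = 0 := by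
      intro j hj1 hjlt
      by_contra hne
      obtain ⟨ht0, hcle⟩ := hZc j hne
      have := hanti' ht0
      omega
    have hiT : IsTri (n + 2) (Tmap (n + 2) y) := by
      rw [hdecomp]
      exact pres_IsTri M Z (n + 2 - M + 1) (n + 2) hZT (by omega) (by omega) (by omega)
    refine ⟨⟨hiT, ?_⟩, fun _ => ?_, ?_⟩
    · intro p hp1 hp2
      rw [hdecomp, pres_udim (n + 2) Z M (n + 2 - M + 1) (by omega) (by omega) (by omega) p]
      rw [hZu p hp1 hp2]
      have hdu := dec_udim hT hy1 (n + 2 + 1 - p) (by omega) (by omega)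
      by_cases hpM : p ≤ M
      · rw [if_pos ⟨hp1, hpM⟩]
        rw [if_pos (by omega)] at hdu
        omega
      · rw [if_neg (by omega)]
        rw [if_neg (by omega)] at hdu
        omega
    · rw [hdecomp]
      exact BA M (n + 2) Z 1 (by omega) (by omega) hZT le_rfl
        (pcol_pos M Z (n + 2 - M + 1) 1 le_rfl (by omega)) hzero
    · intro j hne
      refine ⟨by omega, ?_⟩
      rw [hdecomp, pres_apply] at hne
      by_cases hj : j = pcol Z M (n + 2 - M + 1) 1
      · omega
      · have hZ1j : Z 1 j ≠ 0 := by
          intro h0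
          apply hne
          rw [h0, if_neg (by tauto)]
        obtain ⟨ht0, hcle⟩ := hZc j hZ1j
        have := hanti' ht0
        omega

/-! ### iterating the decrement, Biter, and the main theorem -/

lemma dec_iter {N : ℕ} {y : ℕ → ℕ → ℕ} (hT : IsTri N y) : ∀ t, t ≤ y N 1 →
    IsTri N ((dec N)^[t] y) ∧ ((dec N)^[t] y) N 1 = y N 1 - t ∧
      (∀ i j, i + j ≠ N + 1 → (dec N)^[t] y i j = y i j) := by
  intro t
  induction t with
  | zero =>
    intro _
    exact ⟨hT, by show y N 1 = y N 1 - 0; omega, fun i j _ => rfl⟩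
  | succ t ih =>
    intro ht
    obtain ⟨h1, h2, h3⟩ := ih (by omega)
    have hpos : 0 < ((dec N)^[t] y) N 1 := by omega
    rw [Function.iterate_succ_apply']
    refine ⟨dec_tri h1 hpos, ?_, ?_⟩
    · rw [dec_N1 h1 hpos]; omega
    · intro i j hij
      rw [dec_offladder _ i j hij, h3 i j hij]

lemma biter_spec (n : ℕ)
    (hinner : ∀ (y : ℕ → ℕ → ℕ), IsTri (n + 2) y → 0 < y (n + 2) 1 →
      Bproc (n + 2) (Tmap (n + 2) y) 1 = (Tmap (n + 2) (dec (n + 2) y), mstar (n + 2) y))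
    (y : ℕ → ℕ → ℕ) (hT : IsTri (n + 2) y) :
    ∀ t, t ≤ y (n + 2) 1 →
      (Biter (n + 2) (Tmap (n + 2) y) t).1 = Tmap (n + 2) ((dec (n + 2))^[t] y) ∧
      ∀ j, 1 ≤ j →
        ((Biter (n + 2) (Tmap (n + 2) y) t).2.countP (fun q => decide (j ≤ q)))
          + ((dec (n + 2))^[t] y) (n + 2 + 1 - j) j = y (n + 2 + 1 - j) j := by
  intro t
  induction t with
  | zero =>
    intro _
    constructor
    · rfl
    · intro j hj
      simp [Biter]
  | succ t ih =>
    intro ht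
    obtain ⟨ih1, ih2⟩ := ih (by omega)
    obtain ⟨hYt, hYtN1, hYtoff⟩ := dec_iter hT t (by omega)
    have hpos : 0 < ((dec (n + 2))^[t] y) (n + 2) 1 := by omega
    have hstep : Biter (n + 2) (Tmap (n + 2) y) (t + 1)
        = ((Bproc (n + 2) (Biter (n + 2) (Tmap (n + 2) y) t).1 1).1,
           (Biter (n + 2) (Tmap (n + 2) y) t).2
             ++ [(Bproc (n + 2) (Biter (n + 2) (Tmap (n + 2) y) t).1 1).2]) := rfl
    have hB := hinner ((dec (n + 2))^[t] y) hYt hpos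
    constructor
    · rw [hstep, ih1, hB, Function.iterate_succ_apply']
    · intro j hj
      rw [hstep, ih1, hB]
      simp only [List.countP_append, List.countP_cons, List.countP_nil]
      rw [Function.iterate_succ_apply']
      have hkey : (if decide (j ≤ mstar (n + 2) ((dec (n + 2))^[t] y)) = true then 1 else 0)
          + dec (n + 2) ((dec (n + 2))^[t] y) (n + 2 + 1 - j) j
          = ((dec (n + 2))^[t] y) (n + 2 + 1 - j) j := by
        by_cases hjm : j ≤ mstar (n + 2) ((dec (n + 2))^[t] y)
        · rw [if_pos (by simpa using hjm)]
          have hdecv : dec (n + 2) ((dec (n + 2))^[t] y) (n + 2 + 1 - j) j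
              = ((dec (n + 2))^[t] y) (n + 2 + 1 - j) j - 1 := by
            have hjn : j ≤ n + 2 := le_trans hjm (mstar_spec hYt hpos).2.1
            show (if (n + 2 + 1 - j) + j = n + 2 + 1
                ∧ j ≤ mstar (n + 2) ((dec (n + 2))^[t] y) then _ else _) = _
            rw [if_pos ⟨by omega, hjm⟩]
          have hpos2 := ladder_pos hYt hpos j hj hjm
          rw [hdecv]
          omega
        · rw [if_neg (by simpa using hjm)]
          have hdecv : dec (n + 2) ((dec (n + 2))^[t] y) (n + 2 + 1 - j) j
              = ((dec (n + 2))^[t] y) (n + 2 + 1 - j) j := by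
            show (if (n + 2 + 1 - j) + j = n + 2 + 1
                ∧ j ≤ mstar (n + 2) ((dec (n + 2))^[t] y) then _ else _) = _
            rw [if_neg (fun u => hjm u.2)]
          rw [hdecv]
          omega
      have hold := ih2 j hj
      omega

lemma main : ∀ (N : ℕ) (y : ℕ → ℕ → ℕ), IsTri N y →
    ((IsTri N (Tmap N y) ∧
      ∀ p, 1 ≤ p → p ≤ N → udim N (Tmap N y) p = udim N y (N + 1 - p)) ∧
     Tinv N (Tmap N y) = y) := by
  intro N
  induction N with
  | zero =>
    intro y hT
    refine ⟨⟨hT, ?_⟩, rfl⟩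
    intro p h1 h2
    omega
  | succ N' IHo =>
    rcases N' with _ | n
    · -- N = 1
      intro y hT
      refine ⟨⟨hT, ?_⟩, rfl⟩
      intro p h1 h2
      have hp : p = 1 := by omega
      subst hp
      rfl
    · -- N = n + 2
      intro y hT0
      have hT : IsTri (n + 2) y := hT0
      show (IsTri (n + 2) (Tmap (n + 2) y) ∧
        ∀ p, 1 ≤ p → p ≤ n + 2 →
          udim (n + 2) (Tmap (n + 2) y) p = udim (n + 2) y (n + 2 + 1 - p)) ∧
        Tinv (n + 2) (Tmap (n + 2) y) = y
      have IH1 : ∀ y', IsTri (n + 1) y' →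
          (IsTri (n + 1) (Tmap (n + 1) y') ∧
            ∀ p, 1 ≤ p → p ≤ n + 1 →
              udim (n + 1) (Tmap (n + 1) y') p = udim (n + 1) y' (n + 1 + 1 - p)) :=
        fun y' h => (IHo y' h).1
      obtain ⟨hA, hB, _⟩ := inner n IH1 (y (n + 2) 1) y hT rfl
      refine ⟨hA, ?_⟩
      have hu1 : udim (n + 2) (Tmap (n + 2) y) 1 = y (n + 2) 1 := by
        rw [hA.2 1 (by omega) (by omega), show n + 2 + 1 - 1 = n + 2 from by omega,
          udim_rowN (n + 2) (by omega)]
      have hinner' : ∀ (y' : ℕ → ℕ → ℕ), IsTri (n + 2) y' → 0 < y' (n + 2) 1 →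
          Bproc (n + 2) (Tmap (n + 2) y') 1
            = (Tmap (n + 2) (dec (n + 2) y'), mstar (n + 2) y') :=
        fun y' h1 h2 => (inner n IH1 (y' (n + 2) 1) y' h1 rfl).2.1 h2
      obtain ⟨hb1, hb2⟩ := biter_spec n hinner' y hT (y (n + 2) 1) le_rfl
      obtain ⟨hYT, hYTN1, hYToff⟩ := dec_iter hT (y (n + 2) 1) le_rfl
      have hYT0 : ((dec (n + 2))^[y (n + 2) 1] y) (n + 2) 1 = 0 := by omega
      have hdel : delLadder (n + 2) ((dec (n + 2))^[y (n + 2) 1] y)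
          = delLadder (n + 2) y := by
        funext i j
        simp only [delLadder]
        split_ifs with h
        · exact hYToff i j (by omega)
        · rfl
      have hTbase := Tmap_base n _ hYT hYT0
      rw [hdel] at hTbase
      have hTinv : Tinv (n + 2) (Tmap (n + 2) y)
          = adjLadder (n + 2)
              (Tinv (n + 1) (delChute (Biter (n + 2) (Tmap (n + 2) y)
                (udim (n + 2) (Tmap (n + 2) y) 1)).1))
              (fun j => (Biter (n + 2) (Tmap (n + 2) y)
                (udim (n + 2) (Tmap (n + 2) y) 1)).2.countP (fun q => decide (j ≤ q))) := rfl
      rw [hTinv, hu1, hb1, hTbase]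
      have hdT : IsTri (n + 1) (delLadder (n + 2) y) :=
        delLadder_IsTri (N := n + 2) (by omega) hT
      have hXT : IsTri (n + 1) (Tmap (n + 1) (delLadder (n + 2) y)) := (IH1 _ hdT).1
      have hdc : delChute (adjChute (Tmap (n + 1) (delLadder (n + 2) y)) (fun _ => 0))
          = Tmap (n + 1) (delLadder (n + 2) y) := by
        funext p q
        simp only [delChute, adjChute]
        by_cases hp : 1 ≤ p ∧ 1 ≤ q
        · rw [if_pos hp, if_neg (by omega), if_neg (by omega),
            show p + 1 - 1 = p from by omega]
        · rw [if_neg hp]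
          exact (hXT.1 p q (fun u => hp ⟨u.1, u.2.2.1⟩)).symm
      rw [hdc, (IHo _ hdT).2]
      funext i j
      simp only [adjLadder, delLadder]
      by_cases hg : 1 ≤ i ∧ 1 ≤ j ∧ i + j = n + 2 + 1
      · rw [if_pos hg]
        have hcnt := hb2 j hg.2.1
        have hlad0 : ((dec (n + 2))^[y (n + 2) 1] y) (n + 2 + 1 - j) j = 0 :=
          ladder_eq_zero hYT hYT0 j hg.2.1
        rw [show n + 2 + 1 - j = i from by omega] at hcnt hlad0
        omega
      · rw [if_neg hg]
        split_ifs with h2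
        · rfl
        · exact (hT.1 i j (by omega)).symm

/-! ### finiteness of P(w) and transport lemmas -/

lemma InP_congr {n : ℕ} {w w' : ℕ → ℕ} (h : ∀ i, 1 ≤ i → i ≤ n → w i = w' i)
    {y : ℕ → ℕ → ℕ} (hy : InP n w y) : InP n w' y :=
  ⟨hy.1, fun i h1 h2 => by rw [← h i h1 h2]; exact hy.2 i h1 h2⟩

lemma Tmap_mem {n : ℕ} {w : ℕ → ℕ} {y : ℕ → ℕ → ℕ} (hy : InP n w y) :
    InP n (fun i => w (n + 1 - i)) (Tmap n y) := by
  obtain ⟨⟨hTt, hTu⟩, _⟩ := main n y hy.1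
  exact ⟨hTt, fun i h1 h2 => by
    rw [hTu i h1 h2, hy.2 (n + 1 - i) (by omega) (by omega)]⟩

lemma Tinv_Tmap {n : ℕ} {w : ℕ → ℕ} {y : ℕ → ℕ → ℕ} (hy : InP n w y) :
    Tinv n (Tmap n y) = y := (main n y hy.1).2

lemma InP_fin (n : ℕ) (w : ℕ → ℕ) : {y : ℕ → ℕ → ℕ | InP n w y}.Finite := by
  classical
  set B := (Finset.Icc 1 n).sup w with hB
  have hinj : Set.InjOn
      (fun (y : ℕ → ℕ → ℕ) => fun (p : Fin (n + 1) × Fin (n + 1)) =>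
        (⟨min (y p.1.val p.2.val) B, by omega⟩ : Fin (B + 1)))
      {y | InP n w y} := by
    intro y hy y' hy' heq
    simp only [Set.mem_setOf_eq] at hy hy'
    funext i j
    by_cases hin : 1 ≤ i ∧ i ≤ n ∧ 1 ≤ j ∧ j ≤ n - i + 1
    · have hle : ∀ z : ℕ → ℕ → ℕ, InP n w z → z i j ≤ B := by
        intro z hz
        have h1 : z i j ≤ udim n z i := by
          apply Finset.single_le_sum (f := fun j => z i j)
          · intro k _; omega
          · rw [Finset.mem_Icc]; exact ⟨hin.2.2.1, hin.2.2.2⟩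
        rw [hz.2 i hin.1 hin.2.1] at h1
        exact le_trans h1 (Finset.le_sup (by rw [Finset.mem_Icc]; exact ⟨hin.1, hin.2.1⟩))
      have hkey := congrFun heq (⟨i, by omega⟩, ⟨j, by omega⟩)
      have hval : min (y i j) B = min (y' i j) B := by
        simpa using congrArg Fin.val hkey
      have h1 := hle y hy
      have h2 := hle y' hy'
      rw [min_eq_left h1, min_eq_left h2] at hval
      exact hval
    · rw [hy.1.1 i j hin, hy'.1.1 i j hin]
  exact Set.Finite.of_finite_image (Set.toFinite _) hinj

end CFT

/-- `T : P(w) → P(w*)` and `T' : P(w*) → P(w)` are bijections,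
inverse to one another. -/
theorem Tmap_Tinv_bijections (n : ℕ) (hn : 1 ≤ n) (w : ℕ → ℕ) :
    Set.BijOn (Tmap n) {y | InP n w y} {y | InP n (fun i => w (n + 1 - i)) y} ∧
    Set.BijOn (Tinv n) {y | InP n (fun i => w (n + 1 - i)) y} {y | InP n w y} ∧
    (∀ y, InP n (fun i => w (n + 1 - i)) y → Tmap n (Tinv n y) = y) ∧
    (∀ y, InP n w y → Tinv n (Tmap n y) = y) := by
  classical
  set w' : ℕ → ℕ := fun i => w (n + 1 - i) with hw'
  have hmt : Set.MapsTo (Tmap n) {y | InP n w y} {y | InP n w' y} :=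
    fun y hy => CFT.Tmap_mem hy
  have hw'' : ∀ y, InP n (fun i => w' (n + 1 - i)) y → InP n w y := by
    intro y h
    refine CFT.InP_congr ?_ h
    intro i h1 h2
    show w' (n + 1 - i) = w i
    rw [hw']
    show w (n + 1 - (n + 1 - i)) = w i
    rw [show n + 1 - (n + 1 - i) = i from by omega]
  have hmt' : Set.MapsTo (Tmap n) {y | InP n w' y} {y | InP n w y} :=
    fun y hy => hw'' _ (CFT.Tmap_mem hy)
  have hli : ∀ y ∈ {y | InP n w y}, Tinv n (Tmap n y) = y :=
    fun y hy => CFT.Tinv_Tmap hy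
  have hli' : ∀ y ∈ {y | InP n w' y}, Tinv n (Tmap n y) = y :=
    fun y hy => CFT.Tinv_Tmap hy
  have hinj : Set.InjOn (Tmap n) {y | InP n w y} := by
    intro a ha b hb h
    rw [← hli a ha, ← hli b hb, h]
  have hinj2 : Set.InjOn (Tmap n) {y | InP n w' y} := by
    intro a ha b hb h
    rw [← hli' a ha, ← hli' b hb, h]
  have hfin : {y | InP n w y}.Finite := CFT.InP_fin n w
  have hfin' : {y | InP n w' y}.Finite := CFT.InP_fin n w'
  have himg : Tmap n '' {y | InP n w y} = {y | InP n w' y} := by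
    apply Set.eq_of_subset_of_ncard_le (Set.image_subset_iff.2 hmt) ?_ hfin'
    have e1 : (Tmap n '' {y | InP n w y}).ncard = {y | InP n w y}.ncard :=
      Set.ncard_image_of_injOn hinj
    have e2 : (Tmap n '' {y | InP n w' y}).ncard = {y | InP n w' y}.ncard :=
      Set.ncard_image_of_injOn hinj2
    have e3 : {y | InP n w' y}.ncard ≤ {y | InP n w y}.ncard := by
      rw [← e2]
      exact Set.ncard_le_ncard (Set.image_subset_iff.2 hmt') hfin
    omega
  have hsurj : Set.SurjOn (Tmap n) {y | InP n w y} {y | InP n w' y} := by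
    rw [Set.SurjOn, himg]
  have hTT' : ∀ y ∈ {y | InP n w' y}, Tmap n (Tinv n y) = y := by
    intro y hy
    rw [← himg] at hy
    obtain ⟨x, hx, rfl⟩ := hy
    rw [hli x hx]
  have hmtinv : Set.MapsTo (Tinv n) {y | InP n w' y} {y | InP n w y} := by
    intro y hy
    rw [← himg] at hy
    obtain ⟨x, hx, rfl⟩ := hy
    rw [hli x hx]
    exact hx
  have hinvinj : Set.InjOn (Tinv n) {y | InP n w' y} := by
    intro a ha b hb h
    rw [← hTT' a ha, ← hTT' b hb, h]
  have hinvsurj : Set.SurjOn (Tinv n) {y | InP n w' y} {y | InP n w y} := by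
    intro x hx
    exact ⟨Tmap n x, hmt hx, hli x hx⟩
  exact ⟨⟨hmt, hinj, hsurj⟩, ⟨hmtinv, hinvinj, hinvsurj⟩,
    fun y hy => hTT' y hy, fun y hy => hli y hy⟩
end

section
/- If Y is a triangular array with I(Y,k) < ∞ and J(Y,k) = ∞, and Y' = Lower(Y, 1, I(Y,k)), then K_1(Y', n) = I(Y,k); consequently a(Y',1,n) = (Y, 0, I(Y,k)). -/
open scoped BigOperators Classical

/-- If `I(Y,k) < ∞` and `J(Y,k) = ∞`, and `Y' = Lower(Y,1,I(Y,k))`,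
then `K_1(Y',n) = I(Y,k)`, and consequently `a(Y',1,n) = (Y, 0, I(Y,k))`. -/
theorem Kval_lower_eq_Idef (n : ℕ) (hn : 1 ≤ n) (y : ℕ → ℕ → ℕ) (hy : IsTri n y)
    (k : ℕ) (hk : 1 ≤ k) (hkn : k ≤ n)
    (hI : (Iset n y k).Nonempty) (hJ : ¬(Jset n y k).Nonempty) :
    Kval (Lower y 1 (Idef n y k)) 1 n = Idef n y k ∧
      aStep (Lower y 1 (Idef n y k), 1, n) = (y, 0, Idef n y k) := by
  have hImem : Idef n y k ∈ Iset n y k := Nat.sInf_mem hI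
  obtain ⟨hkI, hIn, hIpos⟩ := hImem
  set I := Idef n y k with hIdef
  have hJ' : ∀ j, I < j → j ≤ n → ¬ y 1 j < y 2 (j - 1) := by
    intro j h1 h2 h3
    exact hJ ⟨j, h1, h2, h3⟩
  have hKey : Kval (Lower y 1 I) 1 n = I := by
    unfold Kval
    rcases eq_or_lt_of_le (hk.trans hkI) with h1 | h2
    · -- I = 1
      have hempty : ((Finset.Icc 2 n).filter
          (fun j => Lower y 1 I 1 j < Lower y 1 I (1 + 1) (j - 1))) = ∅ := by
        apply Finset.filter_false_of_mem
        intro j hj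
        simp only [Finset.mem_Icc] at hj
        have hj1 : ¬ (j = I) := by omega
        have hlow1 : Lower y 1 I 1 j = y 1 j := by simp [Lower, hj1]
        have hlow2 : Lower y 1 I (1 + 1) (j - 1) = y 2 (j - 1) := by
          simp [Lower]
        rw [hlow1, hlow2]
        exact hJ' j (by omega) hj.2
      rw [hempty]
      simp [← h1]
    · -- 2 ≤ I
      have hyI : y 1 I ≤ y 2 (I - 1) := by
        have := hy.2 2 (I - 1) le_rfl (by omega) (by omega) (by omega)
        simpa [show I - 1 + 1 = I by omega] using this
      have hmem : I ∈ (Finset.Icc 2 n).filter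
          (fun j => Lower y 1 I 1 j < Lower y 1 I (1 + 1) (j - 1)) := by
        simp only [Finset.mem_filter, Finset.mem_Icc]
        refine ⟨⟨by omega, hIn⟩, ?_⟩
        have hlow1 : Lower y 1 I 1 I = y 1 I - 1 := by simp [Lower]
        have hlow2 : Lower y 1 I (1 + 1) (I - 1) = y 2 (I - 1) := by simp [Lower]
        rw [hlow1, hlow2]
        omega
      have hle : ((Finset.Icc 2 n).filter
          (fun j => Lower y 1 I 1 j < Lower y 1 I (1 + 1) (j - 1))).sup id ≤ I := by
        apply Finset.sup_le
        intro j hj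
        simp only [Finset.mem_filter, Finset.mem_Icc] at hj
        show j ≤ I
        by_contra hlt
        have hIj : I < j := by omega
        have hj1 : ¬ (j = I) := by omega
        have hlow1 : Lower y 1 I 1 j = y 1 j := by simp [Lower, hj1]
        have hlow2 : Lower y 1 I (1 + 1) (j - 1) = y 2 (j - 1) := by simp [Lower]
        rw [hlow1, hlow2] at hj
        exact hJ' j hIj hj.1.2 hj.2
      have hge : I ≤ ((Finset.Icc 2 n).filter
          (fun j => Lower y 1 I 1 j < Lower y 1 I (1 + 1) (j - 1))).sup id :=
        Finset.le_sup (f := id) hmem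
      have : ((Finset.Icc 2 n).filter
          (fun j => Lower y 1 I 1 j < Lower y 1 I (1 + 1) (j - 1))).sup id = I :=
        le_antisymm hle hge
      rw [this]
      omega
  refine ⟨hKey, ?_⟩
  have hraise : Raise (Lower y 1 I) 1 I = y := by
    funext p q
    by_cases h : p = 1 ∧ q = I
    · obtain ⟨hp, hq⟩ := h
      subst hp hq
      simp only [Raise, Lower, and_self, if_true]
      omega
    · simp [Raise, Lower, h]
  show (Raise (Lower y 1 I) 1 (Kval (Lower y 1 I) 1 n), 1 - 1,
      Kval (Lower y 1 I) 1 n) = (y, 0, I)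
  rw [hKey, hraise]
end

section
/- Let x be a quiver representation admitting a Jordan basis of type Y (that is, x ∈ O_Y), and suppose there is a short exact sequence 0 → M(x) → M(x') → M(e_i) → 0 of representations of the equioriented A_n quiver, where M(e_i) is the simple representation at vertex i. Let v ∈ M(x') have nonzero image in M(e_i), and let k be the smallest integer with (x')^k(v) = 0. If x' ∈ O_{Y'}, then Y' = Raise(Y, i, j) for some j with 1 ≤ j ≤ K_i(Y, k). -/
open scoped BigOperators Classical

-- ladder monotonicity
lemma ladder_mono {n : ℕ} {y : ℕ → ℕ → ℕ} (hT : IsTri n y) :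
    ∀ t a j, 1 ≤ a → a + t ≤ n → t < j → j ≤ n - a + 1 → y a j ≤ y (a + t) (j - t) := by
  intro t
  induction t with
  | zero => intro a j _ _ _ _; simp
  | succ t ih =>
    intro a j ha hat htj hj
    have h1 : y a j ≤ y (a + t) (j - t) := ih a j ha (by omega) (by omega) hj
    have h2 := hT.2 (a + t + 1) (j - t - 1) (by omega) (by omega) (by omega) (by omega)
    have e1 : a + t + 1 - 1 = a + t := by omega
    have e2 : j - t - 1 + 1 = j - t := by omega
    have e3 : a + (t + 1) = a + t + 1 := by omega
    have e4 : j - (t + 1) = j - t - 1 := by omega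
    rw [e1, e2] at h2
    rw [e3, e4]
    exact h1.trans h2


lemma chain_basis {n : ℕ} {w : ℕ → ℕ} {y : ℕ → ℕ → ℕ}
    {x : ∀ m : ℕ, (Fin (w m) → ℂ) →ₗ[ℂ] (Fin (w (m + 1)) → ℂ)}
    {u : ∀ m : ℕ, ℕ → ℕ → (Fin (w m) → ℂ)}
    (hu : IsJordanBasis n w y x u) (hT : IsTri n y) :
    ∀ ℓ a j k, 1 ≤ a → a + ℓ ≤ n → 1 ≤ j → j ≤ n - a + 1 → 1 ≤ k → k ≤ y a j →
      chainMap w x a ℓ (u a j k) = if ℓ < j then u (a + ℓ) (j - ℓ) k else 0 := by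
  intro ℓ
  induction ℓ with
  | zero =>
    intro a j k ha _ hj _ _ _
    simp [chainMap, show 0 < j from hj]
  | succ ℓ ih =>
    intro a j k ha hal hj hjn hk hky
    have hprev : chainMap w x a ℓ (u a j k) = if ℓ < j then u (a + ℓ) (j - ℓ) k else 0 :=
      ih a j k ha (by omega) hj hjn hk hky
    show (x (a + ℓ)) (chainMap w x a ℓ (u a j k)) = _
    rw [hprev]
    by_cases hlj : ℓ < j
    · rw [if_pos hlj]
      have hky' : k ≤ y (a + ℓ) (j - ℓ) := hky.trans (ladder_mono hT ℓ a j ha (by omega) hlj hjn)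
      have := hu.2 (a + ℓ) (j - ℓ) k (by omega) (by omega) (by omega) (by omega) hk hky'
      rw [this]
      by_cases h2 : ℓ + 1 < j
      · rw [if_pos (show 2 ≤ j - ℓ by omega), if_pos h2]
        congr 1 <;> omega
      · rw [if_neg (show ¬ 2 ≤ j - ℓ by omega), if_neg h2]
    · rw [if_neg hlj, if_neg (show ¬ ℓ + 1 < j by omega), map_zero]

lemma rank_chain {n : ℕ} {w : ℕ → ℕ} {y : ℕ → ℕ → ℕ}
    {x : ∀ m : ℕ, (Fin (w m) → ℂ) →ₗ[ℂ] (Fin (w (m + 1)) → ℂ)}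
    {u : ∀ m : ℕ, ℕ → ℕ → (Fin (w m) → ℂ)}
    (hu : IsJordanBasis n w y x u) (hT : IsTri n y)
    {a ℓ : ℕ} (ha : 1 ≤ a) (hal : a + ℓ ≤ n) :
    Module.finrank ℂ (LinearMap.range (chainMap w x a ℓ)) =
      ∑ j ∈ Finset.Icc (ℓ + 1) (n - a + 1), y a j := by
  classical
  set C := chainMap w x a ℓ with hC
  -- the index finset
  set S : Finset ((_ : ℕ) × ℕ) :=
    (Finset.Icc (ℓ + 1) (n - a + 1)).sigma (fun j => Finset.Icc 1 (y a j)) with hS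
  -- the family
  set g : ↥S → (Fin (w (a + ℓ)) → ℂ) := fun q => u (a + ℓ) (q.1.1 - ℓ) q.1.2 with hg
  have hmem : ∀ q : ↥S, (ℓ + 1 ≤ q.1.1 ∧ q.1.1 ≤ n - a + 1) ∧ 1 ≤ q.1.2 ∧ q.1.2 ≤ y a q.1.1 := by
    intro q
    have := q.2
    simp only [hS, Finset.mem_sigma, Finset.mem_Icc] at this
    exact this
  -- g is linearly independent
  have hind : LinearIndependent ℂ g := by
    have hIJ := (hu.1 (a + ℓ) (by omega) (by omega)).1
    have : g = (fun p : {p : ℕ × ℕ // 1 ≤ p.1 ∧ p.1 ≤ n - (a + ℓ) + 1 ∧ 1 ≤ p.2 ∧ p.2 ≤ y (a + ℓ) p.1} =>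
        u (a + ℓ) p.1.1 p.1.2) ∘ (fun q : ↥S =>
          (⟨(q.1.1 - ℓ, q.1.2), by
            obtain ⟨⟨h1, h2⟩, h3, h4⟩ := hmem q
            exact ⟨by omega, by omega, h3,
              h4.trans (ladder_mono hT ℓ a q.1.1 ha hal (by omega) h2)⟩⟩ :
            {p : ℕ × ℕ // 1 ≤ p.1 ∧ p.1 ≤ n - (a + ℓ) + 1 ∧ 1 ≤ p.2 ∧ p.2 ≤ y (a + ℓ) p.1})) := rfl
    rw [this]
    apply hIJ.comp
    intro q q' he
    obtain ⟨⟨h1, _⟩, _, _⟩ := hmem q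
    obtain ⟨⟨h1', _⟩, _, _⟩ := hmem q'
    simp only [Subtype.mk.injEq, Prod.mk.injEq] at he
    obtain ⟨e1, e2⟩ := he
    apply Subtype.ext
    exact Sigma.ext (by omega) (heq_of_eq e2)
  -- range C = span of range g
  have hrange : LinearMap.range C = Submodule.span ℂ (Set.range g) := by
    have hsp := (hu.1 a ha (by omega)).2
    rw [LinearMap.range_eq_map, ← hsp, Submodule.map_span, ← Set.range_comp]
    apply le_antisymm
    · rw [Submodule.span_le]
      rintro _ ⟨p, rfl⟩
      simp only [Function.comp_apply]
      rw [chain_basis hu hT ℓ a p.1.1 p.1.2 ha hal p.2.1 p.2.2.1 p.2.2.2.1 p.2.2.2.2]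
      by_cases hlj : ℓ < p.1.1
      · rw [if_pos hlj]
        apply Submodule.subset_span
        refine ⟨⟨⟨p.1.1, p.1.2⟩, ?_⟩, rfl⟩
        simp only [hS, Finset.mem_sigma, Finset.mem_Icc]
        exact ⟨⟨by omega, p.2.2.1⟩, p.2.2.2.1, p.2.2.2.2⟩
      · rw [if_neg hlj]; exact Submodule.zero_mem _
    · rw [Submodule.span_le]
      rintro _ ⟨q, rfl⟩
      obtain ⟨⟨h1, h2⟩, h3, h4⟩ := hmem q
      have : g q = C (u a q.1.1 q.1.2) := by
        rw [hC, chain_basis hu hT ℓ a q.1.1 q.1.2 ha hal (by omega) h2 h3 h4,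
          if_pos (by omega : ℓ < q.1.1)]
      rw [this]
      apply Submodule.subset_span
      exact ⟨⟨(q.1.1, q.1.2), ⟨by omega, h2, h3, h4⟩⟩, rfl⟩
  rw [hrange, finrank_span_eq_card hind]
  rw [Fintype.card_coe, hS, Finset.card_sigma]
  apply Finset.sum_congr rfl
  intro j _
  rw [Nat.card_Icc]
  omega

lemma ker_chain {n : ℕ} {w : ℕ → ℕ} {y : ℕ → ℕ → ℕ}
    {x : ∀ m : ℕ, (Fin (w m) → ℂ) →ₗ[ℂ] (Fin (w (m + 1)) → ℂ)}
    {u : ∀ m : ℕ, ℕ → ℕ → (Fin (w m) → ℂ)}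
    (hu : IsJordanBasis n w y x u) (hy : InP n w y) (hwtop : w (n + 1) = 0)
    {a ℓ : ℕ} (ha : 1 ≤ a) (han : a ≤ n) (hl : ℓ ≤ n - a + 1) :
    Module.finrank ℂ (LinearMap.ker (chainMap w x a ℓ)) = ∑ j ∈ Finset.Icc 1 ℓ, y a j := by
  have hwa : Module.finrank ℂ (Fin (w a) → ℂ) = w a := Module.finrank_fin_fun ℂ
  have hsum : ∑ j ∈ Finset.Icc 1 (n - a + 1), y a j = w a := hy.2 a ha han
  by_cases hln : a + ℓ ≤ n
  · have e1 := LinearMap.finrank_range_add_finrank_ker (chainMap w x a ℓ)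
    rw [hwa, rank_chain hu hy.1 ha hln] at e1
    have e2 : ∑ j ∈ Finset.Icc 1 ℓ, y a j + ∑ j ∈ Finset.Icc (ℓ + 1) (n - a + 1), y a j
        = ∑ j ∈ Finset.Icc 1 (n - a + 1), y a j := by
      rw [show (1 : ℕ) = 0 + 1 from rfl, Finset.Icc_add_one_left_eq_Ioc, Finset.Icc_add_one_left_eq_Ioc,
        Nat.zero_add, Finset.Icc_add_one_left_eq_Ioc]
      exact Finset.sum_Ioc_consecutive _ (by omega) (by omega)
    omega
  · have hleq : ℓ = n - a + 1 := by omega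
    subst hleq
    have hz : w (a + (n - a + 1)) = 0 := by
      rw [show a + (n - a + 1) = n + 1 by omega]; exact hwtop
    haveI : Subsingleton (Fin (w (a + (n - a + 1))) → ℂ) := by
      rw [hz]; infer_instance
    have : chainMap w x a (n - a + 1) = 0 := Subsingleton.elim _ _
    rw [LinearMap.ker_eq_top.mpr this, finrank_top, hwa, hsum]

lemma chain_comm {n : ℕ} {w w' : ℕ → ℕ}
    {x : ∀ m : ℕ, (Fin (w m) → ℂ) →ₗ[ℂ] (Fin (w (m + 1)) → ℂ)}
    {x' : ∀ m : ℕ, (Fin (w' m) → ℂ) →ₗ[ℂ] (Fin (w' (m + 1)) → ℂ)}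
    {φ : ∀ m : ℕ, (Fin (w m) → ℂ) →ₗ[ℂ] (Fin (w' m) → ℂ)}
    (hφcomm : ∀ m, 1 ≤ m → m + 1 ≤ n → (x' m).comp (φ m) = (φ (m + 1)).comp (x m))
    (hw0' : ∀ m, m = 0 ∨ n < m → w' m = 0) :
    ∀ ℓ a, 1 ≤ a → a + ℓ ≤ n + 1 → ∀ z,
      chainMap w' x' a ℓ (φ a z) = φ (a + ℓ) (chainMap w x a ℓ z) := by
  intro ℓ
  induction ℓ with
  | zero => intro a _ _ z; rfl
  | succ ℓ ih =>
    intro a ha hal z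
    show (x' (a + ℓ)) (chainMap w' x' a ℓ (φ a z)) = φ (a + (ℓ + 1)) ((x (a + ℓ)) (chainMap w x a ℓ z))
    rw [ih a ha (by omega) z]
    by_cases h : a + ℓ + 1 ≤ n
    · exact LinearMap.congr_fun (hφcomm (a + ℓ) (by omega) h) (chainMap w x a ℓ z)
    · haveI : Subsingleton (Fin (w' (a + ℓ + 1)) → ℂ) := by
        rw [hw0' (a + ℓ + 1) (Or.inr (by omega))]; infer_instance
      exact Subsingleton.elim _ _

lemma finrank_sup_span_singleton {V : Type*} [AddCommGroup V] [Module ℂ V]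
    [FiniteDimensional ℂ V] (M : Submodule ℂ V) (z : V) (hz : z ∉ M) :
    Module.finrank ℂ ↥(M ⊔ Submodule.span ℂ {z}) = Module.finrank ℂ M + 1 := by
  have hz0 : z ≠ 0 := fun h => hz (h ▸ M.zero_mem)
  have hinf : M ⊓ Submodule.span ℂ {z} = ⊥ := by
    rw [eq_bot_iff]
    rintro t ⟨ht1, ht2⟩
    obtain ⟨c, rfl⟩ := Submodule.mem_span_singleton.mp ht2
    rcases eq_or_ne c 0 with rfl | hc
    · simp
    · exfalso
      apply hz
      have := M.smul_mem c⁻¹ ht1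
      rwa [smul_smul, inv_mul_cancel₀ hc, one_smul] at this
  have := Submodule.finrank_sup_add_finrank_inf_eq M (Submodule.span ℂ {z})
  rw [hinf, finrank_bot, finrank_span_singleton hz0] at this
  omega

lemma map_range_chain {n : ℕ} {w w' : ℕ → ℕ}
    {x : ∀ m : ℕ, (Fin (w m) → ℂ) →ₗ[ℂ] (Fin (w (m + 1)) → ℂ)}
    {x' : ∀ m : ℕ, (Fin (w' m) → ℂ) →ₗ[ℂ] (Fin (w' (m + 1)) → ℂ)}
    {φ : ∀ m : ℕ, (Fin (w m) → ℂ) →ₗ[ℂ] (Fin (w' m) → ℂ)}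
    (hφcomm : ∀ m, 1 ≤ m → m + 1 ≤ n → (x' m).comp (φ m) = (φ (m + 1)).comp (x m))
    (hw0' : ∀ m, m = 0 ∨ n < m → w' m = 0)
    {a ℓ : ℕ} (ha : 1 ≤ a) (hal : a + ℓ ≤ n + 1) :
    Submodule.map (chainMap w' x' a ℓ) (LinearMap.range (φ a)) =
      Submodule.map (φ (a + ℓ)) (LinearMap.range (chainMap w x a ℓ)) := by
  ext z
  simp only [Submodule.mem_map, LinearMap.mem_range]
  constructor
  · rintro ⟨_, ⟨t, rfl⟩, rfl⟩
    exact ⟨chainMap w x a ℓ t, ⟨t, rfl⟩, (chain_comm hφcomm hw0' ℓ a ha hal t).symm⟩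
  · rintro ⟨_, ⟨t, rfl⟩, rfl⟩
    exact ⟨φ a t, ⟨t, rfl⟩, chain_comm hφcomm hw0' ℓ a ha hal t⟩

/-- Suppose `0 → M(x) → M(x') → M(e_i) → 0` is a short exact sequence
of representations of the equioriented `A_n` quiver, `x ∈ O_Y`, `x' ∈ O_{Y'}`, `v ∈ M(x')_i`
has nonzero image in `M(e_i)`, and `k` is minimal with `(x')^k v = 0`.  Then
`Y' = Raise(Y, i, j)` for some `1 ≤ j ≤ K_i(Y, k)`. -/
theorem ses_raise (n : ℕ) (hn : 1 ≤ n) (w w' : ℕ → ℕ)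
    (hw0 : ∀ m, m = 0 ∨ n < m → w m = 0) (hw0' : ∀ m, m = 0 ∨ n < m → w' m = 0)
    (i : ℕ) (hi : 1 ≤ i) (hin : i ≤ n)
    (hdim : ∀ m, w' m = w m + (if m = i then 1 else 0))
    (y y' : ℕ → ℕ → ℕ) (hy : InP n w y) (hy' : InP n w' y')
    (x : ∀ m : ℕ, (Fin (w m) → ℂ) →ₗ[ℂ] (Fin (w (m + 1)) → ℂ))
    (x' : ∀ m : ℕ, (Fin (w' m) → ℂ) →ₗ[ℂ] (Fin (w' (m + 1)) → ℂ))
    (u : ∀ m : ℕ, ℕ → ℕ → (Fin (w m) → ℂ)) (hu : IsJordanBasis n w y x u)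
    (u' : ∀ m : ℕ, ℕ → ℕ → (Fin (w' m) → ℂ)) (hu' : IsJordanBasis n w' y' x' u')
    (φ : ∀ m : ℕ, (Fin (w m) → ℂ) →ₗ[ℂ] (Fin (w' m) → ℂ))
    (hφinj : ∀ m, 1 ≤ m → m ≤ n → Function.Injective (φ m))
    (hφcomm : ∀ m, 1 ≤ m → m + 1 ≤ n → (x' m).comp (φ m) = (φ (m + 1)).comp (x m))
    (v : Fin (w' i) → ℂ) (hv : v ∉ Set.range (φ i))
    (k : ℕ) (hk0 : chainMap w' x' i k v = 0)
    (hkmin : ∀ k', k' < k → chainMap w' x' i k' v ≠ 0) :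
    ∃ j, 1 ≤ j ∧ j ≤ Kval y i k ∧ y' = Raise y i j := by
  classical
  have hwtop : w (n + 1) = 0 := hw0 _ (Or.inr (by omega))
  have hwtop' : w' (n + 1) = 0 := hw0' _ (Or.inr (by omega))
  -- the predicate P
  set P : ℕ → Prop := fun ℓ => chainMap w' x' i ℓ v ∈
    Submodule.map (φ (i + ℓ)) (LinearMap.range (chainMap w x i ℓ)) with hPdef
  have hPk : P k := by
    show chainMap w' x' i k v ∈ _
    rw [hk0]; exact Submodule.zero_mem _
  have hPtop : P (n - i + 1) := by
    show chainMap w' x' i (n - i + 1) v ∈ _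
    haveI : Subsingleton (Fin (w' (i + (n - i + 1))) → ℂ) := by
      rw [hw0' (i + (n - i + 1)) (Or.inr (by omega))]; infer_instance
    rw [Subsingleton.elim (chainMap w' x' i (n - i + 1) v) 0]
    exact Submodule.zero_mem _
  have hstep : ∀ ℓ, P ℓ → P (ℓ + 1) := by
    intro ℓ hP
    obtain ⟨z, hz1, hz2⟩ := Submodule.mem_map.mp hP
    obtain ⟨t, rfl⟩ := LinearMap.mem_range.mp hz1
    by_cases h : i + ℓ + 1 ≤ n
    · refine Submodule.mem_map.mpr ⟨chainMap w x i (ℓ + 1) t, LinearMap.mem_range.mpr ⟨t, rfl⟩, ?_⟩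
      show φ (i + (ℓ + 1)) ((x (i + ℓ)) (chainMap w x i ℓ t)) = chainMap w' x' i (ℓ + 1) v
      have hc := LinearMap.congr_fun (hφcomm (i + ℓ) (by omega) h) (chainMap w x i ℓ t)
      simp only [LinearMap.coe_comp, Function.comp_apply] at hc
      show φ (i + ℓ + 1) ((x (i + ℓ)) (chainMap w x i ℓ t)) = (x' (i + ℓ)) (chainMap w' x' i ℓ v)
      rw [← hc, hz2]
    · haveI : Subsingleton (Fin (w' (i + (ℓ + 1))) → ℂ) := by
        rw [hw0' (i + (ℓ + 1)) (Or.inr (by omega))]; infer_instance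
      show chainMap w' x' i (ℓ + 1) v ∈ _
      rw [Subsingleton.elim (chainMap w' x' i (ℓ + 1) v) 0]
      exact Submodule.zero_mem _
  have hmono : ∀ ℓ m, P ℓ → ℓ ≤ m → P m := by
    intro ℓ m hP hlm
    induction m with
    | zero => rwa [Nat.le_zero.mp hlm] at hP
    | succ m ih =>
      rcases Nat.lt_or_ge ℓ (m + 1) with h | h
      · exact hstep m (ih (by omega))
      · rwa [show ℓ = m + 1 by omega] at hP
  have hP0 : ¬ P 0 := by
    intro hc
    obtain ⟨z, _, hz2⟩ := Submodule.mem_map.mp hc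
    exact hv ⟨z, hz2⟩
  have hex : ∃ ℓ, P ℓ := ⟨n - i + 1, hPtop⟩
  set j₀ := Nat.find hex with hj₀def
  have hj₀P : P j₀ := Nat.find_spec hex
  have hj₀min : ∀ m, m < j₀ → ¬ P m := fun m hm => Nat.find_min hex hm
  have hj₀le : j₀ ≤ n - i + 1 := Nat.find_le hPtop
  have hj₀k : j₀ ≤ k := Nat.find_le hPk
  have hj₀1 : 1 ≤ j₀ := by
    rcases Nat.eq_zero_or_pos j₀ with h | h
    · exact absurd (h ▸ hj₀P) hP0
    · exact h
  have hPiff : ∀ ℓ, P ℓ ↔ j₀ ≤ ℓ := by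
    intro ℓ
    constructor
    · intro h
      by_contra hc
      exact hj₀min ℓ (by omega) h
    · exact fun h => hmono j₀ ℓ hj₀P h
  -- rank relation at row i
  have hrank : ∀ ℓ, ℓ ≤ n - i →
      Module.finrank ℂ (LinearMap.range (chainMap w' x' i ℓ)) =
        Module.finrank ℂ (LinearMap.range (chainMap w x i ℓ)) + (if P ℓ then 0 else 1) := by
    intro ℓ hl
    have hinj : Function.Injective (φ (i + ℓ)) := hφinj (i + ℓ) (by omega) (by omega)
    have hv0 : v ≠ 0 := fun h => hv ⟨0, by rw [map_zero, h]⟩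
    have hvr : v ∉ LinearMap.range (φ i) := fun h => hv (LinearMap.mem_range.mp h)
    have htop : (⊤ : Submodule ℂ (Fin (w' i) → ℂ)) =
        LinearMap.range (φ i) ⊔ Submodule.span ℂ {v} := by
      symm
      apply Submodule.eq_top_of_finrank_eq
      rw [finrank_sup_span_singleton _ v hvr,
        LinearMap.finrank_range_of_inj (hφinj i hi hin), Module.finrank_fin_fun,
        Module.finrank_fin_fun, hdim i, if_pos rfl]
    have hsplit : LinearMap.range (chainMap w' x' i ℓ) =
        Submodule.map (φ (i + ℓ)) (LinearMap.range (chainMap w x i ℓ)) ⊔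
          Submodule.span ℂ {chainMap w' x' i ℓ v} := by
      rw [LinearMap.range_eq_map, htop, Submodule.map_sup,
        map_range_chain hφcomm hw0' hi (by omega),
        Submodule.map_span, Set.image_singleton]
    have hφdim : Module.finrank ℂ
        (Submodule.map (φ (i + ℓ)) (LinearMap.range (chainMap w x i ℓ))) =
        Module.finrank ℂ (LinearMap.range (chainMap w x i ℓ)) :=
      (Submodule.equivMapOfInjective _ hinj _).finrank_eq.symm
    by_cases hP : P ℓ
    · rw [if_pos hP, hsplit, sup_eq_left.mpr
        (Submodule.span_le.mpr (Set.singleton_subset_iff.mpr hP)), hφdim]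
      omega
    · rw [if_neg hP, hsplit, finrank_sup_span_singleton _ _ hP, hφdim]
  -- S relation at row i
  have hrelI : ∀ ℓ, ℓ ≤ n - i + 1 →
      (∑ j ∈ Finset.Icc 1 ℓ, y' i j) + (if P ℓ then 0 else 1) =
        (∑ j ∈ Finset.Icc 1 ℓ, y i j) + 1 := by
    intro ℓ hl
    by_cases hln : ℓ ≤ n - i
    · have e1 := LinearMap.finrank_range_add_finrank_ker (chainMap w' x' i ℓ)
      have e2 := LinearMap.finrank_range_add_finrank_ker (chainMap w x i ℓ)
      rw [Module.finrank_fin_fun, ker_chain hu' hy' hwtop' hi hin hl] at e1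
      rw [Module.finrank_fin_fun, ker_chain hu hy hwtop hi hin hl] at e2
      have e3 := hrank ℓ hln
      have e4 : w' i = w i + 1 := by rw [hdim i, if_pos rfl]
      by_cases hP : P ℓ
      · rw [if_pos hP] at e3 ⊢; omega
      · rw [if_neg hP] at e3 ⊢; omega
    · have hleq : ℓ = n - i + 1 := by omega
      subst hleq
      rw [if_pos hPtop]
      have e1 : ∑ j ∈ Finset.Icc 1 (n - i + 1), y' i j = w' i := hy'.2 i hi hin
      have e2 : ∑ j ∈ Finset.Icc 1 (n - i + 1), y i j = w i := hy.2 i hi hin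
      have e4 : w' i = w i + 1 := by rw [hdim i, if_pos rfl]
      omega
  -- S relation at other rows
  have hrelA : ∀ a, 1 ≤ a → a ≤ n → a ≠ i → ∀ ℓ, ℓ ≤ n - a + 1 →
      (∑ j ∈ Finset.Icc 1 ℓ, y' a j) = ∑ j ∈ Finset.Icc 1 ℓ, y a j := by
    intro a ha han hai ℓ hl
    have e4 : w' a = w a := by rw [hdim a, if_neg hai]; omega
    by_cases hln : ℓ ≤ n - a
    · have hrtop : LinearMap.range (φ a) = ⊤ := by
        apply Submodule.eq_top_of_finrank_eq
        rw [LinearMap.finrank_range_of_inj (hφinj a ha han), Module.finrank_fin_fun,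
          Module.finrank_fin_fun, e4]
      have hr : Module.finrank ℂ (LinearMap.range (chainMap w' x' a ℓ)) =
          Module.finrank ℂ (LinearMap.range (chainMap w x a ℓ)) := by
        rw [LinearMap.range_eq_map, ← hrtop,
          map_range_chain hφcomm hw0' ha (by omega)]
        exact ((Submodule.equivMapOfInjective _ (hφinj (a + ℓ) (by omega) (by omega)) _).finrank_eq).symm
      have e1 := LinearMap.finrank_range_add_finrank_ker (chainMap w' x' a ℓ)
      have e2 := LinearMap.finrank_range_add_finrank_ker (chainMap w x a ℓ)
      rw [Module.finrank_fin_fun, ker_chain hu' hy' hwtop' ha han hl] at e1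
      rw [Module.finrank_fin_fun, ker_chain hu hy hwtop ha han hl] at e2
      omega
    · have hleq : ℓ = n - a + 1 := by omega
      subst hleq
      have e1 : ∑ j ∈ Finset.Icc 1 (n - a + 1), y' a j = w' a := hy'.2 a ha han
      have e2 : ∑ j ∈ Finset.Icc 1 (n - a + 1), y a j = w a := hy.2 a ha han
      omega
  -- conclude y' = Raise y i j₀
  have heq : y' = Raise y i j₀ := by
    funext a j
    show y' a j = if a = i ∧ j = j₀ then y a j + 1 else y a j
    by_cases hrange : 1 ≤ a ∧ a ≤ n ∧ 1 ≤ j ∧ j ≤ n - a + 1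
    · obtain ⟨ha, han, hj1, hjn⟩ := hrange
      obtain ⟨m, rfl⟩ : ∃ m, j = m + 1 := ⟨j - 1, by omega⟩
      by_cases hai : a = i
      · subst hai
        have h1 := hrelI (m + 1) hjn
        have h2 := hrelI m (by omega)
        rw [Finset.sum_Icc_succ_top (by omega), Finset.sum_Icc_succ_top (by omega)] at h1
        by_cases hc : m + 1 = j₀
        · rw [if_pos ⟨rfl, hc⟩]
          rw [if_pos ((hPiff (m + 1)).mpr (by omega))] at h1
          rw [if_neg (fun hP => hj₀min m (by omega) hP)] at h2
          omega
        · rw [if_neg (fun hx => hc hx.2)]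
          rcases Nat.lt_or_ge (m + 1) j₀ with hlt | hge
          · rw [if_neg (fun hP => hj₀min (m+1) hlt hP)] at h1
            rw [if_neg (fun hP => hj₀min m (by omega) hP)] at h2
            omega
          · rw [if_pos ((hPiff (m + 1)).mpr hge)] at h1
            rw [if_pos ((hPiff m).mpr (by omega))] at h2
            omega
      · rw [if_neg (fun hx => hai hx.1)]
        have h1 := hrelA a ha han hai (m + 1) hjn
        have h2 := hrelA a ha han hai m (by omega)
        rw [Finset.sum_Icc_succ_top (by omega), Finset.sum_Icc_succ_top (by omega)] at h1
        omega
    · rw [hy'.1.1 a j hrange, hy.1.1 a j hrange, if_neg]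
      rintro ⟨rfl, rfl⟩
      exact hrange ⟨hi, hin, hj₀1, hj₀le⟩
  -- the Kval bound
  refine ⟨j₀, hj₀1, ?_, heq⟩
  rcases Nat.lt_or_ge j₀ 2 with h2 | h2
  · have : j₀ = 1 := by omega
    rw [this]
    exact le_sup_right
  · have hi1 : i + 1 ≤ n := by omega
    have htri := hy'.1.2 (i + 1) (j₀ - 1) (by omega) hi1 (by omega) (by omega)
    rw [show i + 1 - 1 = i by omega, show j₀ - 1 + 1 = j₀ by omega] at htri
    rw [heq] at htri
    have hlt : y i j₀ < y (i + 1) (j₀ - 1) := by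
      have e1 : Raise y i j₀ i j₀ = y i j₀ + 1 := if_pos ⟨rfl, rfl⟩
      have e2 : Raise y i j₀ (i + 1) (j₀ - 1) = y (i + 1) (j₀ - 1) := if_neg (by omega)
      rw [e1, e2] at htri
      omega
    have hmem : j₀ ∈ (Finset.Icc 2 k).filter (fun j => y i j < y (i + 1) (j - 1)) := by
      rw [Finset.mem_filter, Finset.mem_Icc]
      exact ⟨⟨h2, hj₀k⟩, hlt⟩
    calc j₀ = id j₀ := rfl
      _ ≤ ((Finset.Icc 2 k).filter (fun j => y i j < y (i + 1) (j - 1))).sup id :=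
          Finset.le_sup hmem
      _ ≤ Kval y i k := le_sup_left
end
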